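/- arXiv:1710.09606 — 5 statements merged into one kernel-verified Lean document; each statement's English description precedes it below -/
import Mathlib

section
/- Let 𝔽 be a division ring, n a positive integer, and let R be the free left 𝔽-module with basis the free monoid ℳ on the symbols x₁,…,xₙ. (i) Suppose a multiplication on R makes R a ring whose multiplicative identity is the empty word 1, which restricts to concatenation of words on ℳ, is additive on degrees (the degree of a product of two nonzero elements is the sum of their degrees, degree meaning the maximal word length in the support), and for which multiplication on the left by elements of 𝔽 (embedded as 𝔽·1) agrees with scalar multiplication. Then for each i and each a ∈ 𝔽 there are unique σ_{i,j}(a), δᵢ(a) ∈ 𝔽 with xᵢa = Σ_{j=1}^n σ_{i,j}(a)xⱼ + δᵢ(a); the map σ : 𝔽 → Mₙ(𝔽), a ↦ (σ_{i,j}(a)), is a unital ring homomorphism; and δ = (δ₁,…,δₙ)ᵀ : 𝔽 → 𝔽ⁿ is additive and satisfies δ(ab) = σ(a)δ(b) + δ(a)b for all a,b ∈ 𝔽. (ii) Conversely, for every unital ring homomorphism σ : 𝔽 → Mₙ(𝔽) and every additive map δ : 𝔽 → 𝔽ⁿ with δ(ab) = σ(a)δ(b) + δ(a)b for all a,b ∈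 𝔽, there exists exactly one multiplication on R with all the properties listed in (i) and satisfying xᵢa = Σ_{j=1}^n σ_{i,j}(a)xⱼ + δᵢ(a) for all i and all a ∈ 𝔽. -/
/- Common setup: free multivariate skew polynomial rings over a division ring. -/

open Matrix Finsupp

/-- The underlying left `𝔽`-module of the free multivariate skew polynomial ring:
the free left `𝔽`-module with basis the free monoid on `n` symbols. -/
abbrev SkewPoly (𝔽 : Type*) [DivisionRing 𝔽] (n : ℕ) : Type _ := FreeMonoid (Fin n) →₀ 𝔽

namespace SkewPoly

variable {𝔽 : Type*} [DivisionRing 𝔽] {n : ℕ}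

/-- The variable `xᵢ` as a skew polynomial. -/
noncomputable def X (𝔽 : Type*) [DivisionRing 𝔽] {n : ℕ} (i : Fin n) : SkewPoly 𝔽 n :=
  Finsupp.single (FreeMonoid.of i) 1

/-- The constant `a` as a skew polynomial (coefficient on the empty word). -/
noncomputable def C {𝔽 : Type*} [DivisionRing 𝔽] (n : ℕ) (a : 𝔽) :
    SkewPoly 𝔽 n := Finsupp.single 1 a

/-- The degree of a skew polynomial: the maximal length of a word in its support
(`⊥` for the zero polynomial). -/
noncomputable def deg (F : SkewPoly 𝔽 n) : WithBot ℕ :=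
  F.support.sup fun m => ((FreeMonoid.length m : ℕ) : WithBot ℕ)

/-- A matrix morphism `σ : 𝔽 → Mₙ(𝔽)`: a unital ring homomorphism. -/
def IsMatrixMorphism (σ : 𝔽 → Matrix (Fin n) (Fin n) 𝔽) : Prop :=
  σ 1 = 1 ∧ (∀ a b : 𝔽, σ (a + b) = σ a + σ b) ∧ (∀ a b : 𝔽, σ (a * b) = σ a * σ b)

/-- A `σ`-vector derivation `δ : 𝔽 → 𝔽ⁿ`: additive with `δ(ab) = σ(a)δ(b) + δ(a)b`. -/
def IsVectorDerivation (σ : 𝔽 → Matrix (Fin n) (Fin n) 𝔽) (δ : 𝔽 → Fin n → 𝔽) : Prop :=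
  (∀ a b : 𝔽, δ (a + b) = δ a + δ b) ∧
    (∀ a b : 𝔽, δ (a * b) = σ a *ᵥ δ b + fun i => δ a i * b)

/-- A multiplication on the free module `SkewPoly 𝔽 n` making it a ring (with the
existing addition) whose identity is the empty word, which restricts to concatenation
on monomials, is additive on degrees of nonzero elements, and for which left
multiplication by constants is scalar multiplication. -/
structure RawMul (𝔽 : Type*) [DivisionRing 𝔽] (n : ℕ) where
  /-- the multiplication -/
  mul : SkewPoly 𝔽 n → SkewPoly 𝔽 n → SkewPoly 𝔽 n
  mul_add : ∀ F G H : SkewPoly 𝔽 n, mul F (G + H) = mul F G + mul F H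
  add_mul : ∀ F G H : SkewPoly 𝔽 n, mul (F + G) H = mul F H + mul G H
  mul_assoc : ∀ F G H : SkewPoly 𝔽 n, mul (mul F G) H = mul F (mul G H)
  one_mul : ∀ F : SkewPoly 𝔽 n, mul (C n 1) F = F
  mul_one : ∀ F : SkewPoly 𝔽 n, mul F (C n 1) = F
  mono_mul_mono : ∀ m m' : FreeMonoid (Fin n),
    mul (Finsupp.single m 1) (Finsupp.single m' 1) = Finsupp.single (m * m') 1
  const_mul : ∀ (a : 𝔽) (F : SkewPoly 𝔽 n), mul (C n a) F = a • F
  deg_mul : ∀ F G : SkewPoly 𝔽 n, F ≠ 0 → G ≠ 0 → deg (mul F G) = deg F + deg G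

/-- The multiplication `S` satisfies the commutation rule
`xᵢ a = Σⱼ σ_{i,j}(a) xⱼ + δᵢ(a)`. -/
def HasCommRule (S : RawMul 𝔽 n) (σ : 𝔽 → Matrix (Fin n) (Fin n) 𝔽)
    (δ : 𝔽 → Fin n → 𝔽) : Prop :=
  ∀ (i : Fin n) (a : 𝔽),
    S.mul (X 𝔽 i) (C n a) =
      (∑ j : Fin n, Finsupp.single (FreeMonoid.of j) (σ a i j)) + C n (δ a i)

/-- `F = Σᵢ Gᵢ (xᵢ - aᵢ) + b`, i.e. `b` is a remainder of `F` upon right division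
by `x₁ - a₁, …, xₙ - aₙ`; equivalently `F - b` lies in the left ideal generated by
the `xᵢ - aᵢ`. -/
def Decomposes (S : RawMul 𝔽 n) (a : Fin n → 𝔽) (F : SkewPoly 𝔽 n) (b : 𝔽) : Prop :=
  ∃ G : Fin n → SkewPoly 𝔽 n,
    F = (∑ i : Fin n, S.mul (G i) (X 𝔽 i - C n (a i))) + C n b

/-- The evaluation of `F` at the point `a`: the unique `b ∈ 𝔽` such that `F - b`
lies in the left ideal generated by `x₁ - a₁, …, xₙ - aₙ`. -/
noncomputable def eval (S : RawMul 𝔽 n) (a : Fin n → 𝔽) (F : SkewPoly 𝔽 n) : 𝔽 :=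
  letI := Classical.propDecidable (∃ b : 𝔽, Decomposes S a F b)
  if h : ∃ b : 𝔽, Decomposes S a F b then h.choose else 0

/-- The `(σ,δ)`-conjugate `a^c = σ(c) a c⁻¹ + δ(c) c⁻¹` of `a` with respect to `c`. -/
noncomputable def conj (σ : 𝔽 → Matrix (Fin n) (Fin n) 𝔽) (δ : 𝔽 → Fin n → 𝔽)
    (a : Fin n → 𝔽) (c : 𝔽) : Fin n → 𝔽 :=
  fun i => (σ c *ᵥ a) i * c⁻¹ + δ c i * c⁻¹

/-- `I(Ω)`: the set of skew polynomials vanishing at every point of `Ω`. -/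
def zeroIdeal (S : RawMul 𝔽 n) (Ω : Set (Fin n → 𝔽)) : Set (SkewPoly 𝔽 n) :=
  {F | ∀ a ∈ Ω, eval S a F = 0}

/-- The left ideal of `SkewPoly 𝔽 n` generated by `x₁ - a₁, …, xₙ - aₙ`
(the set of sums of left multiples of the generators). -/
def pointIdeal (S : RawMul 𝔽 n) (a : Fin n → 𝔽) : Set (SkewPoly 𝔽 n) :=
  {F | ∃ G : Fin n → SkewPoly 𝔽 n, F = ∑ i : Fin n, S.mul (G i) (X 𝔽 i - C n (a i))}

/-- The P-closure `Ω̄ = Z(I(Ω))` of a set of points `Ω`. -/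
def pClosure (S : RawMul 𝔽 n) (Ω : Set (Fin n → 𝔽)) : Set (Fin n → 𝔽) :=
  {a | ∀ F ∈ zeroIdeal S Ω, eval S a F = 0}

/-- `Ω` is P-closed if it equals its P-closure. -/
def IsPClosed (S : RawMul 𝔽 n) (Ω : Set (Fin n → 𝔽)) : Prop := pClosure S Ω = Ω

/-- `B` is P-independent: no point of `B` lies in the P-closure of the rest. -/
def PIndep (S : RawMul 𝔽 n) (B : Set (Fin n → 𝔽)) : Prop :=
  ∀ a ∈ B, a ∉ pClosure S (B \ {a})

/-- `B` is a P-basis of `Ω`: a P-independent subset of `Ω` whose P-closure is `Ω`. -/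
def IsPBasis (S : RawMul 𝔽 n) (B Ω : Set (Fin n → 𝔽)) : Prop :=
  B ⊆ Ω ∧ PIndep S B ∧ pClosure S B = Ω

/-- `Ω` is finitely generated: it is the P-closure of a finite subset of itself. -/
def FinGen (S : RawMul 𝔽 n) (Ω : Set (Fin n → 𝔽)) : Prop :=
  ∃ G : Set (Fin n → 𝔽), G.Finite ∧ G ⊆ Ω ∧ pClosure S G = Ω

/-- The rank of a P-closed set: the (common) cardinality of its P-bases. -/
noncomputable def pRank (S : RawMul 𝔽 n) (Ω : Set (Fin n → 𝔽)) : ℕ :=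
  sInf {k : ℕ | ∃ B : Finset (Fin n → 𝔽), IsPBasis S ↑B Ω ∧ B.card = k}

/-- The image of the evaluation map `E_Ω : R → 𝔽^Ω`, as a left `𝔽`-subspace of `𝔽^Ω`
(the span of the image; the image is itself a subspace since evaluation is left linear). -/
noncomputable def evalSpan (S : RawMul 𝔽 n) (Ω : Set (Fin n → 𝔽)) :
    Submodule 𝔽 (↥Ω → 𝔽) :=
  Submodule.span 𝔽 (Set.range fun F : SkewPoly 𝔽 n => fun a : ↥Ω => eval S ↑a F)

/-- `I` is a two-sided ideal with respect to the multiplication `S`. -/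
def IsTwoSidedIdealSet (S : RawMul 𝔽 n) (I : Set (SkewPoly 𝔽 n)) : Prop :=
  (0 : SkewPoly 𝔽 n) ∈ I ∧ (∀ F ∈ I, ∀ G ∈ I, F + G ∈ I) ∧ (∀ F ∈ I, -F ∈ I) ∧
    (∀ F ∈ I, ∀ G : SkewPoly 𝔽 n, S.mul G F ∈ I) ∧
    (∀ F ∈ I, ∀ G : SkewPoly 𝔽 n, S.mul F G ∈ I)


/-- The left row-rank of the skew Vandermonde matrix `V_d(G)`: the dimension of the
left `𝔽`-span of its rows `(N_m(c))_{c ∈ G}`, indexed by the words `m` of length `< d`,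
where `N_m(c)` is the evaluation of the monomial `m` at the point `c`. -/
noncomputable def vandermondeRank (S : RawMul 𝔽 n) (G : Finset (Fin n → 𝔽)) (d : ℕ) :
    Cardinal :=
  Module.rank 𝔽 ↥(Submodule.span 𝔽 (Set.range
    fun m : {m : FreeMonoid (Fin n) // FreeMonoid.length m < d} =>
      fun c : ↥G => eval S ↑c (Finsupp.single (m : FreeMonoid (Fin n)) (1 : 𝔽))))

end SkewPoly

open SkewPoly

namespace Stmt0Aux

open SkewPoly Finsupp
local notation "ω" => FreeMonoid.of

variable {𝔽 : Type*} [DivisionRing 𝔽] {n : ℕ}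

theorem C_def (a : 𝔽) : C n a = Finsupp.single (1 : FreeMonoid (Fin n)) a := rfl

theorem single_eq_smul (m : FreeMonoid (Fin n)) (a : 𝔽) :
    Finsupp.single m a = a • Finsupp.single m (1 : 𝔽) := by
  rw [Finsupp.smul_single', mul_one]

/-- coefficient of a "degree ≤ 1" combination at `ω k` -/
theorem key_coeff_of (c : Fin n → 𝔽) (e : 𝔽) (k : Fin n) :
    ((∑ j, Finsupp.single (ω j) (c j)) + Finsupp.single (1 : FreeMonoid (Fin n)) e) (ω k)
      = c k := by
  classical
  rw [Finsupp.add_apply, Finsupp.finset_sum_apply]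
  simp [Finsupp.single_apply, FreeMonoid.of_injective.eq_iff, (FreeMonoid.one_ne_of k)]

theorem key_coeff_one (c : Fin n → 𝔽) (e : 𝔽) :
    ((∑ j, Finsupp.single (ω j) (c j)) + Finsupp.single (1 : FreeMonoid (Fin n)) e) 1
      = e := by
  classical
  rw [Finsupp.add_apply, Finsupp.finset_sum_apply]
  simp [Finsupp.single_apply, (FreeMonoid.of_ne_one (α := Fin n))]

section RawMulBasic

variable (S : RawMul 𝔽 n)

theorem mul_zero' (F : SkewPoly 𝔽 n) : S.mul F 0 = 0 := by
  have h := S.mul_add F 0 0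
  rw [add_zero] at h
  exact (left_eq_add.mp h)

theorem zero_mul' (F : SkewPoly 𝔽 n) : S.mul 0 F = 0 := by
  have h := S.add_mul 0 0 F
  rw [add_zero] at h
  exact (left_eq_add.mp h)

theorem smul_mul' (a : 𝔽) (F G : SkewPoly 𝔽 n) :
    S.mul (a • F) G = a • S.mul F G := by
  rw [← S.const_mul a F, S.mul_assoc, S.const_mul]

/-- right multiplication as an additive monoid hom -/
noncomputable def mulRight (G : SkewPoly 𝔽 n) : SkewPoly 𝔽 n →+ SkewPoly 𝔽 n where
  toFun F := S.mul F G
  map_zero' := zero_mul' S G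
  map_add' F F' := S.add_mul F F' G

/-- left multiplication as an additive monoid hom -/
noncomputable def mulLeft (F : SkewPoly 𝔽 n) : SkewPoly 𝔽 n →+ SkewPoly 𝔽 n where
  toFun G := S.mul F G
  map_zero' := mul_zero' S F
  map_add' G G' := S.mul_add F G G'

theorem sum_mul' (S : RawMul 𝔽 n) {ι : Type*} (s : Finset ι) (f : ι → SkewPoly 𝔽 n)
    (G : SkewPoly 𝔽 n) : S.mul (∑ j ∈ s, f j) G = ∑ j ∈ s, S.mul (f j) G :=
  map_sum (mulRight S G) f s

theorem mul_sum' (S : RawMul 𝔽 n) {ι : Type*} (s : Finset ι) (f : ι → SkewPoly 𝔽 n)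
    (F : SkewPoly 𝔽 n) : S.mul F (∑ j ∈ s, f j) = ∑ j ∈ s, S.mul F (f j) :=
  map_sum (mulLeft S F) f s

end RawMulBasic

/-- The fundamental computation: for any `S` with the commutation rule,
`xᵢ · (b m')` is given by the `(σ, δ)` formula. -/
theorem mul_X_single {S : RawMul 𝔽 n} {σ : 𝔽 → Matrix (Fin n) (Fin n) 𝔽}
    {δ : 𝔽 → Fin n → 𝔽} (hS : HasCommRule S σ δ) (i : Fin n)
    (m' : FreeMonoid (Fin n)) (b : 𝔽) :
    S.mul (X 𝔽 i) (Finsupp.single m' b) =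
      (∑ j, Finsupp.single (ω j * m') (σ b i j)) + Finsupp.single m' (δ b i) := by
  have h1 : (Finsupp.single m' b : SkewPoly 𝔽 n) = S.mul (C n b) (Finsupp.single m' 1) := by
    rw [S.const_mul, ← single_eq_smul]
  have h2 : ∀ j, S.mul (Finsupp.single (ω j) (σ b i j)) (Finsupp.single m' 1)
      = Finsupp.single (ω j * m') (σ b i j) := by
    intro j
    rw [single_eq_smul (ω j) (σ b i j), smul_mul', S.mono_mul_mono, ← single_eq_smul]
  rw [h1, ← S.mul_assoc, hS i b, S.add_mul, sum_mul']
  rw [Finset.sum_congr rfl fun j _ => h2 j]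
  congr 1
  rw [C_def, single_eq_smul 1 (δ b i), smul_mul', S.mono_mul_mono, one_mul, ← single_eq_smul]

/-! ### Part A -/

theorem deg_single (m : FreeMonoid (Fin n)) {c : 𝔽} (hc : c ≠ 0) :
    deg (Finsupp.single m c : SkewPoly 𝔽 n) = (FreeMonoid.length m : WithBot ℕ) := by
  rw [deg, Finsupp.support_single_ne_zero m hc, Finset.sup_singleton]

theorem length_le_of_deg_le {F : SkewPoly 𝔽 n} {d : ℕ} (h : deg F ≤ (d : WithBot ℕ))
    {u : FreeMonoid (Fin n)} (hu : F u ≠ 0) : FreeMonoid.length u ≤ d := by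
  have h1 : ((FreeMonoid.length u : ℕ) : WithBot ℕ) ≤ deg F :=
    Finset.le_sup (f := fun m => ((FreeMonoid.length m : ℕ) : WithBot ℕ))
      (Finsupp.mem_support_iff.mpr hu)
  exact_mod_cast h1.trans h

/-- Classification of elements of degree at most 1. -/
theorem eq_of_deg_le_one (F : SkewPoly 𝔽 n) (h : deg F ≤ (1 : ℕ)) :
    F = (∑ j, Finsupp.single (ω j) (F (ω j))) + Finsupp.single 1 (F 1) := by
  classical
  ext u
  induction u using FreeMonoid.casesOn with
  | one => rw [key_coeff_one]
  | of_mul i u' =>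
    induction u' using FreeMonoid.casesOn with
    | one => rw [mul_one, key_coeff_of]
    | of_mul i' u'' =>
      have hlen : FreeMonoid.length (FreeMonoid.of i * (FreeMonoid.of i' * u'')) =
        2 + FreeMonoid.length u'' := by
        simp [FreeMonoid.length_mul, FreeMonoid.length_of]; omega
      have h0 : F (FreeMonoid.of i * (FreeMonoid.of i' * u'')) = 0 := by
        by_contra hne
        have := length_le_of_deg_le h hne
        omega
      rw [h0, Finsupp.add_apply, Finsupp.finset_sum_apply]
      have h2 : ∀ j : Fin n, (Finsupp.single (ω j) (F (ω j)))
          (FreeMonoid.of i * (FreeMonoid.of i' * u'')) = 0 := by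
        intro j
        rw [Finsupp.single_apply_eq_zero]
        intro hj
        have := congrArg FreeMonoid.length hj
        rw [FreeMonoid.length_of, hlen] at this
        omega
      have h3 : (Finsupp.single (1 : FreeMonoid (Fin n)) (F 1))
          (FreeMonoid.of i * (FreeMonoid.of i' * u'')) = 0 := by
        rw [Finsupp.single_apply_eq_zero]
        intro hj
        have := congrArg FreeMonoid.length hj
        rw [FreeMonoid.length_one, hlen] at this
        omega
      simp [h2, h3]

theorem deg_mul_X_C_le (S : RawMul 𝔽 n) (i : Fin n) (a : 𝔽) :
    deg (S.mul (X 𝔽 i) (C n a)) ≤ (1 : ℕ) := by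
  by_cases ha : a = 0
  · rw [ha, C_def, Finsupp.single_zero, mul_zero' S]
    show deg (0 : SkewPoly 𝔽 n) ≤ _
    rw [deg, Finsupp.support_zero, Finset.sup_empty]
    exact bot_le
  · have hX : X 𝔽 i ≠ (0 : SkewPoly 𝔽 n) :=
      fun h => (one_ne_zero : (1:𝔽) ≠ 0) (Finsupp.single_eq_zero.mp h)
    have hC : C n a ≠ (0 : SkewPoly 𝔽 n) :=
      fun h => ha (Finsupp.single_eq_zero.mp h)
    rw [S.deg_mul _ _ hX hC, X, C_def, deg_single _ (one_ne_zero),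
      deg_single _ ha, FreeMonoid.length_of, FreeMonoid.length_one]
    norm_num

/-- Part A (i): existence and uniqueness of `(σ, δ)`. -/
theorem partA_exists_unique (S : RawMul 𝔽 n) :
    ∃! p : (𝔽 → Matrix (Fin n) (Fin n) 𝔽) × (𝔽 → Fin n → 𝔽), HasCommRule S p.1 p.2 := by
  classical
  refine ⟨⟨fun a i j => (S.mul (X 𝔽 i) (C n a)) (ω j),
           fun a i => (S.mul (X 𝔽 i) (C n a)) 1⟩, fun i a => ?_, ?_⟩
  · exact eq_of_deg_le_one _ (deg_mul_X_C_le S i a)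
  · rintro ⟨σ', δ'⟩ hq
    have hσ : ∀ (a : 𝔽) (i k : Fin n), σ' a i k = (S.mul (X 𝔽 i) (C n a)) (ω k) := by
      intro a i k
      rw [hq i a, C_def, key_coeff_of]
    have hδ : ∀ (a : 𝔽) (i : Fin n), δ' a i = (S.mul (X 𝔽 i) (C n a)) 1 := by
      intro a i
      rw [hq i a, C_def, key_coeff_one]
    refine Prod.ext ?_ ?_
    · funext a; ext i k; exact hσ a i k
    · funext a i; exact hδ a i

/-- Part A (ii): the pair `(σ, δ)` from a commutation rule is a matrix morphism
together with a vector derivation. -/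
theorem partA_props {S : RawMul 𝔽 n} {σ : 𝔽 → Matrix (Fin n) (Fin n) 𝔽}
    {δ : 𝔽 → Fin n → 𝔽} (hS : HasCommRule S σ δ) :
    IsMatrixMorphism σ ∧ IsVectorDerivation σ δ := by
  classical
  have coeffσ : ∀ (a : 𝔽) (i k : Fin n), σ a i k = (S.mul (X 𝔽 i) (C n a)) (ω k) := by
    intro a i k; rw [hS i a, C_def, key_coeff_of]
  have coeffδ : ∀ (a : 𝔽) (i : Fin n), δ a i = (S.mul (X 𝔽 i) (C n a)) 1 := by
    intro a i; rw [hS i a, C_def, key_coeff_one]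
  have hCmul : ∀ a b : 𝔽, C n (a * b) = S.mul (C n a) (C n b) := by
    intro a b
    rw [S.const_mul, C_def, C_def, Finsupp.smul_single']
  have hE : ∀ (a b : 𝔽) (i : Fin n),
      S.mul (X 𝔽 i) (C n (a * b)) =
        (∑ j, σ a i j • S.mul (X 𝔽 j) (C n b)) + Finsupp.single 1 (δ a i * b) := by
    intro a b i
    rw [hCmul a b, ← S.mul_assoc, hS i a, S.add_mul, sum_mul']
    congr 1
    · refine Finset.sum_congr rfl fun j _ => ?_
      rw [single_eq_smul (ω j) (σ a i j), smul_mul']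
      rfl
    · rw [C_def, single_eq_smul 1 (δ a i), smul_mul', ← C_def, S.one_mul, C_def,
        Finsupp.smul_single']
  -- coefficients of the right-hand side of hE
  have rhs_of : ∀ (a b : 𝔽) (i : Fin n) (k : Fin n),
      (((∑ j, σ a i j • S.mul (X 𝔽 j) (C n b)) + Finsupp.single 1 (δ a i * b) :
          SkewPoly 𝔽 n)) (ω k)
        = ∑ j, σ a i j * σ b j k := by
    intro a b i k
    rw [Finsupp.add_apply, Finsupp.finset_sum_apply]
    rw [Finsupp.single_eq_of_ne' (FreeMonoid.one_ne_of k), add_zero]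
    refine Finset.sum_congr rfl fun j _ => ?_
    rw [Finsupp.smul_apply, ← coeffσ b j k, smul_eq_mul]
  have rhs_one : ∀ (a b : 𝔽) (i : Fin n),
      (((∑ j, σ a i j • S.mul (X 𝔽 j) (C n b)) + Finsupp.single 1 (δ a i * b) :
          SkewPoly 𝔽 n)) 1
        = (∑ j, σ a i j * δ b j) + δ a i * b := by
    intro a b i
    rw [Finsupp.add_apply, Finsupp.finset_sum_apply, Finsupp.single_eq_same]
    congr 1
    refine Finset.sum_congr rfl fun j _ => ?_
    rw [Finsupp.smul_apply, ← coeffδ b j, smul_eq_mul]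
  have hadd : ∀ (a b : 𝔽) (i : Fin n),
      S.mul (X 𝔽 i) (C n (a + b)) = S.mul (X 𝔽 i) (C n a) + S.mul (X 𝔽 i) (C n b) := by
    intro a b i
    rw [C_def, Finsupp.single_add, ← C_def]
    exact S.mul_add _ _ _
  refine ⟨⟨?_, ?_, ?_⟩, ?_, ?_⟩
  · -- σ 1 = 1
    ext i k
    rw [coeffσ 1 i k, S.mul_one, X, Finsupp.single_apply, Matrix.one_apply]
    simp [FreeMonoid.of_injective.eq_iff]
  · -- σ additive
    intro a b
    ext i k
    rw [Matrix.add_apply, coeffσ (a+b) i k, coeffσ a i k, coeffσ b i k, hadd a b i,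
      Finsupp.add_apply]
  · -- σ multiplicative
    intro a b
    ext i k
    rw [coeffσ (a*b) i k, hE a b i, rhs_of a b i k, Matrix.mul_apply]
  · -- δ additive
    intro a b
    funext i
    rw [Pi.add_apply, coeffδ (a+b) i, coeffδ a i, coeffδ b i, hadd a b i,
      Finsupp.add_apply]
  · -- δ derivation
    intro a b
    funext i
    rw [Pi.add_apply, coeffδ (a*b) i, hE a b i, rhs_one a b i]
    simp [Matrix.mulVec, dotProduct]

/-! ### Part B: construction -/

section Construction

variable (σ : 𝔽 → Matrix (Fin n) (Fin n) 𝔽) (δ : 𝔽 → Fin n → 𝔽)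

/-- left multiplication by `xᵢ` -/
noncomputable def Lmap (i : Fin n) (G : SkewPoly 𝔽 n) : SkewPoly 𝔽 n :=
  G.sum fun m b =>
    (∑ j, Finsupp.single (FreeMonoid.of j * m) (σ b i j)) + Finsupp.single m (δ b i)

/-- left multiplication by a word -/
noncomputable def Wmap (m : FreeMonoid (Fin n)) (G : SkewPoly 𝔽 n) : SkewPoly 𝔽 n :=
  List.foldr (Lmap σ δ) G (FreeMonoid.toList m)

/-- the skew multiplication -/
noncomputable def rmul (F G : SkewPoly 𝔽 n) : SkewPoly 𝔽 n :=
  F.sum fun m a => a • Wmap σ δ m G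

theorem Wmap_one (G : SkewPoly 𝔽 n) : Wmap σ δ 1 G = G := rfl

theorem Wmap_cons (i : Fin n) (m : FreeMonoid (Fin n)) (G : SkewPoly 𝔽 n) :
    Wmap σ δ (FreeMonoid.of i * m) G = Lmap σ δ i (Wmap σ δ m G) := rfl

variable {σ δ}

theorem sigma_zero (hσ : IsMatrixMorphism σ) : σ 0 = 0 := by
  have h := hσ.2.1 0 0
  rw [add_zero] at h
  exact (left_eq_add.mp h)

theorem delta_zero (hδ : IsVectorDerivation σ δ) : δ 0 = 0 := by
  have h := hδ.1 0 0
  rw [add_zero] at h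
  exact (left_eq_add.mp h)

theorem delta_one (hσ : IsMatrixMorphism σ) (hδ : IsVectorDerivation σ δ) : δ 1 = 0 := by
  have h := hδ.2 1 1
  rw [mul_one, hσ.1, Matrix.one_mulVec] at h
  simp only [mul_one] at h
  exact (left_eq_add.mp h)

theorem Lmap_single (hσ : IsMatrixMorphism σ) (hδ : IsVectorDerivation σ δ)
    (i : Fin n) (m : FreeMonoid (Fin n)) (b : 𝔽) :
    Lmap σ δ i (Finsupp.single m b) =
      (∑ j, Finsupp.single (FreeMonoid.of j * m) (σ b i j)) + Finsupp.single m (δ b i) := by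
  refine Finsupp.sum_single_index ?_
  simp [sigma_zero hσ, delta_zero hδ]

theorem Lmap_zero (i : Fin n) : Lmap σ δ i 0 = 0 := by
  simp [Lmap]

theorem Lmap_add (hσ : IsMatrixMorphism σ) (hδ : IsVectorDerivation σ δ)
    (i : Fin n) (G H : SkewPoly 𝔽 n) :
    Lmap σ δ i (G + H) = Lmap σ δ i G + Lmap σ δ i H := by
  refine Finsupp.sum_add_index' ?_ ?_
  · intro m; simp [sigma_zero hσ, delta_zero hδ]
  · intro m b₁ b₂
    rw [hσ.2.1 b₁ b₂, hδ.1 b₁ b₂]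
    simp only [Matrix.add_apply, Pi.add_apply, Finsupp.single_add, Finset.sum_add_distrib]
    abel

theorem Wmap_zero (m : FreeMonoid (Fin n)) : Wmap σ δ m 0 = 0 := by
  induction m using FreeMonoid.inductionOn' with
  | one => rfl
  | of_mul i m ih => rw [Wmap_cons, ih, Lmap_zero]

theorem Wmap_add (hσ : IsMatrixMorphism σ) (hδ : IsVectorDerivation σ δ)
    (m : FreeMonoid (Fin n)) (G H : SkewPoly 𝔽 n) :
    Wmap σ δ m (G + H) = Wmap σ δ m G + Wmap σ δ m H := by
  induction m using FreeMonoid.inductionOn' with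
  | one => rfl
  | of_mul i m ih => rw [Wmap_cons, ih, Wmap_cons, Wmap_cons, Lmap_add hσ hδ]

theorem rmul_single (m : FreeMonoid (Fin n)) (a : 𝔽) (G : SkewPoly 𝔽 n) :
    rmul σ δ (Finsupp.single m a) G = a • Wmap σ δ m G :=
  Finsupp.sum_single_index (by rw [zero_smul])

theorem rmul_zero_left (G : SkewPoly 𝔽 n) : rmul σ δ 0 G = 0 := rfl

theorem rmul_add_left (F F' G : SkewPoly 𝔽 n) :
    rmul σ δ (F + F') G = rmul σ δ F G + rmul σ δ F' G :=
  Finsupp.sum_add_index' (fun _ => zero_smul 𝔽 _) (fun _ b₁ b₂ => add_smul b₁ b₂ _)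

theorem rmul_add_right (hσ : IsMatrixMorphism σ) (hδ : IsVectorDerivation σ δ)
    (F G H : SkewPoly 𝔽 n) :
    rmul σ δ F (G + H) = rmul σ δ F G + rmul σ δ F H := by
  rw [rmul, rmul, rmul, ← Finsupp.sum_add]
  exact Finsupp.sum_congr fun m _ => by rw [Wmap_add hσ hδ, smul_add]

theorem rmul_smul_left (a : 𝔽) (F G : SkewPoly 𝔽 n) :
    rmul σ δ (a • F) G = a • rmul σ δ F G := by
  rw [rmul, Finsupp.sum_smul_index (fun m => zero_smul 𝔽 (Wmap σ δ m G)), rmul,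
    Finsupp.smul_sum]
  exact Finsupp.sum_congr fun m _ => by rw [mul_smul]

theorem Wmap_single_one (hσ : IsMatrixMorphism σ) (hδ : IsVectorDerivation σ δ)
    (m m' : FreeMonoid (Fin n)) :
    Wmap σ δ m (Finsupp.single m' (1 : 𝔽)) = Finsupp.single (m * m') 1 := by
  induction m using FreeMonoid.inductionOn' with
  | one => rw [Wmap_one, one_mul]
  | of_mul i m ih =>
    rw [Wmap_cons, ih, Lmap_single hσ hδ, hσ.1, delta_one hσ hδ]
    have h1 : ∀ j : Fin n, Finsupp.single (FreeMonoid.of j * (m * m'))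
        ((1 : Matrix (Fin n) (Fin n) 𝔽) i j)
        = if i = j then Finsupp.single (FreeMonoid.of i * (m * m')) (1:𝔽) else 0 := by
      intro j
      by_cases h : i = j
      · subst h; simp [Matrix.one_apply]
      · simp [Matrix.one_apply, h]
    rw [Finset.sum_congr rfl fun j _ => h1 j, Finset.sum_ite_eq]
    simp [mul_assoc]

/-- right multiplication by `H` as an additive monoid hom, for `rmul` -/
noncomputable def rmulRight (H : SkewPoly 𝔽 n) : SkewPoly 𝔽 n →+ SkewPoly 𝔽 n where
  toFun F := rmul σ δ F H
  map_zero' := rmul_zero_left H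
  map_add' F F' := rmul_add_left F F' H

theorem rmul_sum_left {ι : Type*} (s : Finset ι) (f : ι → SkewPoly 𝔽 n) (H : SkewPoly 𝔽 n) :
    rmul σ δ (∑ j ∈ s, f j) H = ∑ j ∈ s, rmul σ δ (f j) H :=
  map_sum (rmulRight (σ := σ) (δ := δ) H) f s

theorem Lmap_smul (hσ : IsMatrixMorphism σ) (hδ : IsVectorDerivation σ δ)
    (i : Fin n) (b : 𝔽) (K : SkewPoly 𝔽 n) :
    Lmap σ δ i (b • K) = (∑ j, σ b i j • Lmap σ δ j K) + δ b i • K := by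
  induction K using Finsupp.induction with
  | zero => simp [Lmap_zero]
  | single_add m c f hmf hc ih =>
    rw [smul_add, Lmap_add hσ hδ, ih, smul_add]
    have single_case : Lmap σ δ i (b • Finsupp.single m c) =
        (∑ j, σ b i j • Lmap σ δ j (Finsupp.single m c)) + δ b i • Finsupp.single m c := by
      rw [Finsupp.smul_single', Lmap_single hσ hδ, Finsupp.smul_single']
      have h1 : ∀ j : Fin n, σ b i j • Lmap σ δ j (Finsupp.single m c)
          = (∑ k, Finsupp.single (FreeMonoid.of k * m) (σ b i j * σ c j k))
            + Finsupp.single m (σ b i j * δ c j) := by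
        intro j
        rw [Lmap_single hσ hδ, smul_add, Finset.smul_sum, Finsupp.smul_single']
        congr 1
        exact Finset.sum_congr rfl fun k _ => by rw [Finsupp.smul_single']
      rw [Finset.sum_congr rfl fun j _ => h1 j, Finset.sum_add_distrib, Finset.sum_comm]
      have h2 : ∀ k : Fin n, (∑ j, Finsupp.single (FreeMonoid.of k * m) (σ b i j * σ c j k))
          = Finsupp.single (FreeMonoid.of k * m) (σ (b * c) i k) := by
        intro k
        rw [← Finsupp.single_finset_sum, hσ.2.2, Matrix.mul_apply]
      rw [Finset.sum_congr rfl fun k _ => h2 k, ← Finsupp.single_finset_sum]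
      have h3 : δ (b * c) i = (∑ j, σ b i j * δ c j) + δ b i * c := by
        rw [hδ.2, Pi.add_apply]
        simp [Matrix.mulVec, dotProduct]
      rw [h3, Finsupp.single_add]
      abel
    rw [single_case]
    have h4 : ∀ j : Fin n, σ b i j • Lmap σ δ j ((Finsupp.single m c) + f)
        = σ b i j • Lmap σ δ j (Finsupp.single m c) + σ b i j • Lmap σ δ j f := by
      intro j; rw [Lmap_add hσ hδ, smul_add]
    rw [Finset.sum_congr rfl fun j _ => h4 j, Finset.sum_add_distrib]
    abel

theorem Lmap_rmul (hσ : IsMatrixMorphism σ) (hδ : IsVectorDerivation σ δ)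
    (i : Fin n) (G H : SkewPoly 𝔽 n) :
    Lmap σ δ i (rmul σ δ G H) = rmul σ δ (Lmap σ δ i G) H := by
  induction G using Finsupp.induction with
  | zero => simp [rmul_zero_left, Lmap_zero]
  | single_add m c f hmf hc ih =>
    rw [rmul_add_left, Lmap_add hσ hδ, Lmap_add hσ hδ, ih, rmul_add_left]
    congr 1
    rw [rmul_single, Lmap_smul hσ hδ, Lmap_single hσ hδ, rmul_add_left, rmul_sum_left,
      rmul_single]
    congr 1
    refine Finset.sum_congr rfl fun j _ => ?_
    rw [rmul_single, ← Wmap_cons]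

theorem Wmap_rmul (hσ : IsMatrixMorphism σ) (hδ : IsVectorDerivation σ δ)
    (m : FreeMonoid (Fin n)) (G H : SkewPoly 𝔽 n) :
    Wmap σ δ m (rmul σ δ G H) = rmul σ δ (Wmap σ δ m G) H := by
  induction m using FreeMonoid.inductionOn' with
  | one => rw [Wmap_one, Wmap_one]
  | of_mul i m ih => rw [Wmap_cons, ih, Lmap_rmul hσ hδ, ← Wmap_cons]

theorem rmul_assoc (hσ : IsMatrixMorphism σ) (hδ : IsVectorDerivation σ δ)
    (F G H : SkewPoly 𝔽 n) :
    rmul σ δ (rmul σ δ F G) H = rmul σ δ F (rmul σ δ G H) := by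
  have h1 : rmul σ δ (rmul σ δ F G) H
      = F.sum fun m a => rmul σ δ (a • Wmap σ δ m G) H := by
    show (rmulRight (σ := σ) (δ := δ) H) (F.sum fun m a => a • Wmap σ δ m G)
      = F.sum fun m a => rmul σ δ (a • Wmap σ δ m G) H
    exact map_finsuppSum _ _ _
  rw [h1]
  refine Finsupp.sum_congr fun m _ => ?_
  rw [rmul_smul_left, ← Wmap_rmul hσ hδ]

theorem rmul_one_left (F : SkewPoly 𝔽 n) : rmul σ δ (C n 1) F = F := by
  rw [C_def, rmul_single, Wmap_one, one_smul]

theorem rmul_const (a : 𝔽) (F : SkewPoly 𝔽 n) : rmul σ δ (C n a) F = a • F := by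
  rw [C_def, rmul_single, Wmap_one]

theorem rmul_one_right (hσ : IsMatrixMorphism σ) (hδ : IsVectorDerivation σ δ)
    (F : SkewPoly 𝔽 n) : rmul σ δ F (C n 1) = F := by
  rw [rmul, C_def]
  have h1 : ∀ m (a : 𝔽), a • Wmap σ δ m (Finsupp.single 1 (1:𝔽)) = Finsupp.single m a := by
    intro m a
    rw [Wmap_single_one hσ hδ, mul_one, ← single_eq_smul]
  rw [Finsupp.sum_congr fun m _ => h1 m (F m)]
  exact Finsupp.sum_single F

theorem rmul_mono (hσ : IsMatrixMorphism σ) (hδ : IsVectorDerivation σ δ)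
    (m m' : FreeMonoid (Fin n)) :
    rmul σ δ (Finsupp.single m (1:𝔽)) (Finsupp.single m' (1:𝔽))
      = Finsupp.single (m * m') 1 := by
  rw [rmul_single, Wmap_single_one hσ hδ, one_smul]

theorem rmul_comm_rule (hσ : IsMatrixMorphism σ) (hδ : IsVectorDerivation σ δ)
    (i : Fin n) (a : 𝔽) :
    rmul σ δ (X 𝔽 i) (C n a) =
      (∑ j, Finsupp.single (FreeMonoid.of j) (σ a i j)) + C n (δ a i) := by
  rw [X, C_def, rmul_single, one_smul]
  show Lmap σ δ i (Finsupp.single 1 a) = _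
  rw [Lmap_single hσ hδ, C_def]
  simp

/-! ### theta matrices and degrees -/

/-- iterated entriesของ σ along a pair of words -/
def theta (σ : 𝔽 → Matrix (Fin n) (Fin n) 𝔽) : List (Fin n) → List (Fin n) → 𝔽 → 𝔽
  | [], [], c => c
  | i :: m, q :: p, c => σ (theta σ m p c) i q
  | _, _, _ => 0

/-- all words of length `d` -/
def allWords (n : ℕ) : ℕ → Finset (List (Fin n))
  | 0 => {[]}
  | d+1 => (Finset.univ ×ˢ allWords n d).image fun x => x.1 :: x.2

theorem mem_allWords {d : ℕ} {m : List (Fin n)} : m ∈ allWords n d ↔ m.length = d := by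
  induction d generalizing m with
  | zero => simp [allWords, List.length_eq_zero_iff]
  | succ d ih =>
    cases m with
    | nil => simp [allWords]
    | cons i m =>
      simp only [allWords, Finset.mem_image, Finset.mem_product, Finset.mem_univ, true_and,
        Prod.exists, List.length_cons, Nat.add_left_inj]
      constructor
      · rintro ⟨a, b, hb, heq⟩
        obtain ⟨rfl, rfl⟩ : a = i ∧ b = m := by
          constructor <;> [exact (List.cons.injEq _ _ _ _ ▸ heq).1;
            exact (List.cons.injEq _ _ _ _ ▸ heq).2]
        exact ih.mp hb
      · intro h
        exact ⟨i, m, ih.mpr h, rfl⟩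

theorem sigma_sum (hσ : IsMatrixMorphism σ) {ι : Type*} (s : Finset ι) (f : ι → 𝔽) :
    σ (∑ x ∈ s, f x) = ∑ x ∈ s, σ (f x) := by
  classical
  induction s using Finset.induction with
  | empty => simpa using sigma_zero hσ
  | insert x s hx ih => rw [Finset.sum_insert hx, Finset.sum_insert hx, hσ.2.1, ih]

theorem theta_mul (hσ : IsMatrixMorphism σ) :
    ∀ (d : ℕ) (m q : List (Fin n)), m.length = d → q.length = d → ∀ x y : 𝔽,
      ∑ p ∈ allWords n d, theta σ m p x * theta σ p q y = theta σ m q (x * y) := by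
  intro d
  induction d with
  | zero =>
    intro m q hm hq x y
    rw [List.length_eq_zero_iff] at hm hq
    subst hm; subst hq
    simp [allWords, theta]
  | succ d ih =>
    intro m q hm hq x y
    cases m with
    | nil => simp at hm
    | cons i m' =>
      cases q with
      | nil => simp at hq
      | cons k q' =>
        have hm' : m'.length = d := by simpa using hm
        have hq' : q'.length = d := by simpa using hq
        have hinj : ∀ x ∈ Finset.univ ×ˢ allWords n d, ∀ y ∈ Finset.univ ×ˢ allWords n d,
            (fun x : Fin n × List (Fin n) => x.1 :: x.2) x
              = (fun x : Fin n × List (Fin n) => x.1 :: x.2) y → x = y := by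
          intro x _ y _ hxy
          have h1 := (List.cons.injEq _ _ _ _ ▸ hxy)
          exact Prod.ext h1.1 h1.2
        rw [show allWords n (d+1) = (Finset.univ ×ˢ allWords n d).image
            (fun x => x.1 :: x.2) from rfl, Finset.sum_image hinj]
        rw [Finset.sum_product_right]
        have hstep : ∀ p' ∈ allWords n d,
            ∑ j : Fin n, theta σ (i :: m') (j :: p') x * theta σ (j :: p') (k :: q') y
            = σ (theta σ m' p' x * theta σ p' q' y) i k := by
          intro p' hp'
          show (∑ j, σ (theta σ m' p' x) i j * σ (theta σ p' q' y) j k) = _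
          rw [← Matrix.mul_apply, ← hσ.2.2]
        rw [Finset.sum_congr rfl hstep]
        have : ∑ p' ∈ allWords n d, σ (theta σ m' p' x * theta σ p' q' y) i k
            = σ (∑ p' ∈ allWords n d, theta σ m' p' x * theta σ p' q' y) i k := by
          rw [sigma_sum hσ]
          rw [Matrix.sum_apply]
        rw [this, ih m' q' hm' hq' x y]
        rfl

theorem theta_one (hσ : IsMatrixMorphism σ) :
    ∀ (d : ℕ) (m q : List (Fin n)), m.length = d → q.length = d →
      theta σ m q 1 = if m = q then 1 else 0 := by
  intro d
  induction d with
  | zero =>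
    intro m q hm hq
    rw [List.length_eq_zero_iff] at hm hq
    subst hm; subst hq
    simp [theta]
  | succ d ih =>
    intro m q hm hq
    cases m with
    | nil => simp at hm
    | cons i m' =>
      cases q with
      | nil => simp at hq
      | cons k q' =>
        have hm' : m'.length = d := by simpa using hm
        have hq' : q'.length = d := by simpa using hq
        show σ (theta σ m' q' 1) i k = _
        rw [ih m' q' hm' hq']
        by_cases h : m' = q'
        · subst h
          simp [hσ.1, Matrix.one_apply, List.cons.injEq]
        · rw [if_neg h, sigma_zero hσ]
          have : (i :: m') ≠ (k :: q') := by
            intro hcon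
            exact h (List.cons.injEq _ _ _ _ ▸ hcon).2
          rw [if_neg this]
          rfl

theorem theta_vanish (hσ : IsMatrixMorphism σ) (d : ℕ) {c : 𝔽} (hc : c ≠ 0)
    (a : List (Fin n) → 𝔽)
    (h0 : ∀ p ∈ allWords n d, ∑ m ∈ allWords n d, a m * theta σ m p c = 0) :
    ∀ q ∈ allWords n d, a q = 0 := by
  intro q hq
  have hq' := mem_allWords.mp hq
  have h1 : ∑ m ∈ allWords n d, a m * theta σ m q (c * c⁻¹) = 0 := by
    calc ∑ m ∈ allWords n d, a m * theta σ m q (c * c⁻¹)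
        = ∑ m ∈ allWords n d, ∑ p ∈ allWords n d,
            a m * (theta σ m p c * theta σ p q c⁻¹) := by
          refine Finset.sum_congr rfl fun m hm => ?_
          rw [← Finset.mul_sum, theta_mul hσ d _ _ (mem_allWords.mp hm) hq']
      _ = ∑ p ∈ allWords n d, (∑ m ∈ allWords n d, a m * theta σ m p c)
            * theta σ p q c⁻¹ := by
          rw [Finset.sum_comm]
          refine Finset.sum_congr rfl fun p _ => ?_
          rw [Finset.sum_mul]
          exact Finset.sum_congr rfl fun m _ => (mul_assoc _ _ _).symm
      _ = 0 := Finset.sum_eq_zero fun p hp => by rw [h0 p hp, zero_mul]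
  rw [mul_inv_cancel₀ hc] at h1
  have h2 : ∑ m ∈ allWords n d, a m * theta σ m q 1 = a q := by
    classical
    have : ∀ m ∈ allWords n d, a m * theta σ m q 1 = if m = q then a m else 0 := by
      intro m hm
      rw [theta_one hσ d _ _ (mem_allWords.mp hm) hq']
      by_cases h : m = q <;> simp [h]
    rw [Finset.sum_congr rfl this, Finset.sum_ite_eq' (allWords n d) q a, if_pos hq]
  rw [h2] at h1
  exact h1

/-! ### support bounds and top coefficients -/

theorem support_Lmap (i : Fin n) (K : SkewPoly 𝔽 n) (e : ℕ)
    (hK : ∀ u ∈ K.support, FreeMonoid.length u ≤ e) :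
    ∀ u ∈ (Lmap σ δ i K).support, FreeMonoid.length u ≤ e + 1 := by
  classical
  intro u hu
  have h1 := Finsupp.support_sum hu
  rw [Finset.mem_biUnion] at h1
  obtain ⟨m, hm, hum⟩ := h1
  have h2 := Finsupp.support_add hum
  rcases Finset.mem_union.mp h2 with h3 | h3
  · have h4 := Finsupp.support_finset_sum h3
    rw [Finset.mem_biUnion] at h4
    obtain ⟨j, _, hj⟩ := h4
    have h5 := Finsupp.support_single_subset hj
    rw [Finset.mem_singleton] at h5
    subst h5
    have := hK m hm
    rw [FreeMonoid.length_mul, FreeMonoid.length_of]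
    omega
  · have h5 := Finsupp.support_single_subset h3
    rw [Finset.mem_singleton] at h5
    subst h5
    have := hK u hm
    omega

theorem support_Wmap (m : FreeMonoid (Fin n)) (K : SkewPoly 𝔽 n) (e : ℕ)
    (hK : ∀ u ∈ K.support, FreeMonoid.length u ≤ e) :
    ∀ u ∈ (Wmap σ δ m K).support, FreeMonoid.length u ≤ FreeMonoid.length m + e := by
  induction m using FreeMonoid.inductionOn' with
  | one =>
    intro u hu
    rw [FreeMonoid.length_one]
    simpa using hK u hu
  | of_mul i m ih =>
    intro u hu
    rw [Wmap_cons] at hu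
    have := support_Lmap i (Wmap σ δ m K) (FreeMonoid.length m + e) ih u hu
    rw [FreeMonoid.length_mul, FreeMonoid.length_of]
    omega

theorem Lmap_apply_cons (hσ : IsMatrixMorphism σ) (hδ : IsVectorDerivation σ δ)
    (i j : Fin n) (K : SkewPoly 𝔽 n) (w : FreeMonoid (Fin n)) :
    (Lmap σ δ i K) (FreeMonoid.of j * w) = σ (K w) i j + δ (K (FreeMonoid.of j * w)) i := by
  classical
  rw [Lmap, Finsupp.sum_apply]
  have cons_inj : ∀ (k j : Fin n) (m w : FreeMonoid (Fin n)),
      FreeMonoid.of k * m = FreeMonoid.of j * w ↔ k = j ∧ m = w := by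
    intro k j m w
    constructor
    · intro h
      have h' : k :: FreeMonoid.toList m = j :: FreeMonoid.toList w :=
        congrArg FreeMonoid.toList h
      have h1 := (List.cons.injEq _ _ _ _ ▸ h')
      exact ⟨h1.1, FreeMonoid.toList.injective h1.2⟩
    · rintro ⟨rfl, rfl⟩; rfl
  have hsplit : ∀ (m : FreeMonoid (Fin n)) (b : 𝔽),
      (((∑ k, Finsupp.single (FreeMonoid.of k * m) (σ b i k))
          + Finsupp.single m (δ b i) : SkewPoly 𝔽 n))
        (FreeMonoid.of j * w)
      = (if m = w then σ b i j else 0)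
        + (if m = FreeMonoid.of j * w then δ b i else 0) := by
    intro m b
    rw [Finsupp.add_apply, Finsupp.finset_sum_apply]
    congr 1
    · by_cases hmw : m = w
      · subst hmw
        have : ∀ k : Fin n, (Finsupp.single (FreeMonoid.of k * m) (σ b i k) : SkewPoly 𝔽 n)
            (FreeMonoid.of j * m) = if k = j then σ b i k else 0 := by
          intro k
          rw [Finsupp.single_apply]
          congr 1
          · rw [eq_iff_iff, cons_inj]
            simp
        rw [Finset.sum_congr rfl fun k _ => this k, Finset.sum_ite_eq']
        simp
      · rw [if_neg hmw]
        refine Finset.sum_eq_zero fun k _ => ?_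
        rw [Finsupp.single_eq_of_ne']
        rw [Ne, cons_inj]
        rintro ⟨-, h2⟩
        exact hmw h2
    · rw [Finsupp.single_apply]
  rw [Finsupp.sum_congr (g2 := fun m b => (if m = w then σ b i j else 0)
    + (if m = FreeMonoid.of j * w then δ b i else 0)) (fun m _ => hsplit m (K m))]
  rw [Finsupp.sum]
  rw [Finset.sum_add_distrib]
  congr 1
  · rw [Finset.sum_ite_eq' K.support w fun m => σ (K m) i j]
    by_cases h : w ∈ K.support
    · rw [if_pos h]
    · rw [if_neg h, Finsupp.notMem_support_iff.mp h, sigma_zero hσ]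
      rfl
  · rw [Finset.sum_ite_eq' K.support (FreeMonoid.of j * w) fun m => δ (K m) i]
    by_cases h : FreeMonoid.of j * w ∈ K.support
    · rw [if_pos h]
    · rw [if_neg h, Finsupp.notMem_support_iff.mp h, delta_zero hδ]
      rfl

theorem Wmap_top (hσ : IsMatrixMorphism σ) (hδ : IsVectorDerivation σ δ) :
    ∀ (mL pL : List (Fin n)), mL.length = pL.length →
    ∀ (K : SkewPoly 𝔽 n) (e : ℕ), (∀ u ∈ K.support, FreeMonoid.length u ≤ e) →
    ∀ w : FreeMonoid (Fin n), FreeMonoid.length w = e →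
    (Wmap σ δ (FreeMonoid.ofList mL) K) (FreeMonoid.ofList pL * w)
      = theta σ mL pL (K w) := by
  intro mL
  induction mL with
  | nil =>
    intro pL hlen K e hK w hw
    have : pL = [] := List.length_eq_zero_iff.mp (by simpa using hlen.symm)
    subst this
    show (Wmap σ δ 1 K) ((1 : FreeMonoid (Fin n)) * w) = theta σ [] [] (K w)
    rw [Wmap_one, one_mul]
    rfl
  | cons i mL' ih =>
    intro pL hlen K e hK w hw
    cases pL with
    | nil => simp at hlen
    | cons q pL' =>
      have hlen' : mL'.length = pL'.length := by simpa using hlen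
      show (Wmap σ δ (FreeMonoid.of i * FreeMonoid.ofList mL') K)
        (FreeMonoid.of q * (FreeMonoid.ofList pL' * w)) = _
      rw [Wmap_cons, Lmap_apply_cons hσ hδ]
      have hzero : (Wmap σ δ (FreeMonoid.ofList mL') K)
          (FreeMonoid.of q * (FreeMonoid.ofList pL' * w)) = 0 := by
        by_contra hne
        have hmem := Finsupp.mem_support_iff.mpr hne
        have hb := support_Wmap (FreeMonoid.ofList mL') K e hK _ hmem
        have hL : FreeMonoid.length (FreeMonoid.ofList mL' : FreeMonoid (Fin n))
            = mL'.length := rfl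
        have h1 : FreeMonoid.length
            (FreeMonoid.of q * (FreeMonoid.ofList pL' * w) : FreeMonoid (Fin n))
            = 1 + pL'.length + e := by
          have hOF : (FreeMonoid.ofList pL' : FreeMonoid (Fin n)).length = pL'.length := rfl
          rw [FreeMonoid.length_mul, FreeMonoid.length_mul, FreeMonoid.length_of, hw, hOF]
          omega
        rw [h1, hL] at hb
        omega
      rw [hzero, delta_zero hδ]
      have := ih pL' hlen' K e hK w hw
      rw [this]
      show _ + (0 : Fin n → 𝔽) i = _
      rw [Pi.zero_apply, add_zero]
      rfl

theorem support_rmul (F G : SkewPoly 𝔽 n) (d e : ℕ)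
    (hF : ∀ u ∈ F.support, FreeMonoid.length u ≤ d)
    (hG : ∀ u ∈ G.support, FreeMonoid.length u ≤ e) :
    ∀ u ∈ (rmul σ δ F G).support, FreeMonoid.length u ≤ d + e := by
  classical
  intro u hu
  have h1 := Finsupp.support_sum hu
  rw [Finset.mem_biUnion] at h1
  obtain ⟨m, hm, hum⟩ := h1
  have h2 : u ∈ (Wmap σ δ m G).support := Finsupp.support_smul hum
  have h3 := support_Wmap m G e hG u h2
  have h4 := hF m hm
  omega

theorem rmul_apply_top (hσ : IsMatrixMorphism σ) (hδ : IsVectorDerivation σ δ)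
    (F G : SkewPoly 𝔽 n) (d e : ℕ)
    (hF : ∀ u ∈ F.support, FreeMonoid.length u ≤ d)
    (hG : ∀ u ∈ G.support, FreeMonoid.length u ≤ e)
    (w : FreeMonoid (Fin n)) (hw : FreeMonoid.length w = e)
    (pL : List (Fin n)) (hp : pL.length = d) :
    (rmul σ δ F G) (FreeMonoid.ofList pL * w)
      = ∑ mL ∈ allWords n d, F (FreeMonoid.ofList mL) * theta σ mL pL (G w) := by
  classical
  rw [rmul, Finsupp.sum_apply]
  rw [Finsupp.sum]
  simp only [Finsupp.smul_apply, smul_eq_mul]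
  set s₂ : Finset (FreeMonoid (Fin n)) := (allWords n d).image FreeMonoid.ofList with hs₂
  set f : FreeMonoid (Fin n) → 𝔽 :=
    fun m => F m * (Wmap σ δ m G) (FreeMonoid.ofList pL * w) with hf
  have hlen_u : FreeMonoid.length (FreeMonoid.ofList pL * w : FreeMonoid (Fin n)) = d + e := by
    have h : (FreeMonoid.ofList pL : FreeMonoid (Fin n)).length = pL.length := rfl
    rw [FreeMonoid.length_mul, h, hp, hw]
  have step1 : ∑ m ∈ F.support, f m = ∑ m ∈ F.support ∪ s₂, f m := by
    refine Finset.sum_subset Finset.subset_union_left fun x hx hnx => ?_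
    show F x * (Wmap σ δ x G) (FreeMonoid.ofList pL * w) = 0
    rw [Finsupp.notMem_support_iff.mp hnx, zero_mul]
  have step2 : ∑ m ∈ s₂, f m = ∑ m ∈ F.support ∪ s₂, f m := by
    refine Finset.sum_subset Finset.subset_union_right fun x hx hnx => ?_
    have hxF : x ∈ F.support := by
      rcases Finset.mem_union.mp hx with h | h
      · exact h
      · exact absurd h hnx
    have hlt : FreeMonoid.length x < d := by
      have hle := hF x hxF
      have hne : FreeMonoid.length x ≠ d := by
        intro hcon
        apply hnx
        rw [hs₂, Finset.mem_image]
        exact ⟨FreeMonoid.toList x, mem_allWords.mpr hcon, rfl⟩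
      omega
    have hz : (Wmap σ δ x G) (FreeMonoid.ofList pL * w) = 0 := by
      by_contra hne
      have hb := support_Wmap x G e hG _ (Finsupp.mem_support_iff.mpr hne)
      rw [hlen_u] at hb
      omega
    show F x * (Wmap σ δ x G) (FreeMonoid.ofList pL * w) = 0
    rw [hz, mul_zero]
  rw [step1, ← step2, hs₂]
  rw [Finset.sum_image (fun x _ y _ h => FreeMonoid.ofList.injective h)]
  refine Finset.sum_congr rfl fun mL hmL => ?_
  show F (FreeMonoid.ofList mL) * (Wmap σ δ (FreeMonoid.ofList mL) G) (FreeMonoid.ofList pL * w)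
    = F (FreeMonoid.ofList mL) * theta σ mL pL (G w)
  congr 1
  exact Wmap_top hσ hδ mL pL (by rw [mem_allWords.mp hmL, hp]) G e hG w hw

theorem deg_rmul (hσ : IsMatrixMorphism σ) (hδ : IsVectorDerivation σ δ)
    (F G : SkewPoly 𝔽 n) (hF : F ≠ 0) (hG : G ≠ 0) :
    deg (rmul σ δ F G) = deg F + deg G := by
  classical
  obtain ⟨m₀, hm₀, hdF⟩ := Finset.exists_mem_eq_sup F.support
    (Finsupp.support_nonempty_iff.mpr hF)
    (fun m => ((FreeMonoid.length m : ℕ) : WithBot ℕ))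
  obtain ⟨w₀, hw₀, hdG⟩ := Finset.exists_mem_eq_sup G.support
    (Finsupp.support_nonempty_iff.mpr hG)
    (fun m => ((FreeMonoid.length m : ℕ) : WithBot ℕ))
  set d := FreeMonoid.length m₀ with hd
  set e := FreeMonoid.length w₀ with he
  have hdegF : deg F = (d : WithBot ℕ) := hdF
  have hdegG : deg G = (e : WithBot ℕ) := hdG
  have hFb : ∀ u ∈ F.support, FreeMonoid.length u ≤ d := by
    intro u hu
    have h1 : ((FreeMonoid.length u : ℕ) : WithBot ℕ) ≤ deg F :=
      Finset.le_sup (f := fun m => ((FreeMonoid.length m : ℕ) : WithBot ℕ)) hu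
    rw [hdegF] at h1
    exact_mod_cast h1
  have hGb : ∀ u ∈ G.support, FreeMonoid.length u ≤ e := by
    intro u hu
    have h1 : ((FreeMonoid.length u : ℕ) : WithBot ℕ) ≤ deg G :=
      Finset.le_sup (f := fun m => ((FreeMonoid.length m : ℕ) : WithBot ℕ)) hu
    rw [hdegG] at h1
    exact_mod_cast h1
  rw [hdegF, hdegG, ← Nat.cast_add]
  refine le_antisymm ?_ ?_
  · refine Finset.sup_le fun u hu => ?_
    have := support_rmul F G d e hFb hGb u hu
    exact_mod_cast this
  · -- find a long word in the support
    set c := G w₀ with hc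
    have hcne : c ≠ 0 := Finsupp.mem_support_iff.mp hw₀
    set a : List (Fin n) → 𝔽 := fun l => F (FreeMonoid.ofList l) with ha
    have hane : ∃ q ∈ allWords n d, a q ≠ 0 := by
      refine ⟨FreeMonoid.toList m₀, mem_allWords.mpr rfl, ?_⟩
      exact Finsupp.mem_support_iff.mp hm₀
    have hex : ∃ p ∈ allWords n d, ∑ m ∈ allWords n d, a m * theta σ m p c ≠ 0 := by
      by_contra hcon
      push_neg at hcon
      obtain ⟨q, hq, hqne⟩ := hane
      exact hqne (theta_vanish hσ d hcne a hcon q hq)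
    obtain ⟨p, hp, hpne⟩ := hex
    have happ := rmul_apply_top hσ hδ F G d e hFb hGb w₀ rfl p (mem_allWords.mp hp)
    have hmem : (FreeMonoid.ofList p * w₀) ∈ (rmul σ δ F G).support := by
      rw [Finsupp.mem_support_iff, happ]
      exact hpne
    have h1 : ((FreeMonoid.length (FreeMonoid.ofList p * w₀ : FreeMonoid (Fin n)) : ℕ)
        : WithBot ℕ) ≤ deg (rmul σ δ F G) :=
      Finset.le_sup (f := fun m => ((FreeMonoid.length m : ℕ) : WithBot ℕ)) hmem
    have h2 : FreeMonoid.length (FreeMonoid.ofList p * w₀ : FreeMonoid (Fin n)) = d + e := by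
      have h : (FreeMonoid.ofList p : FreeMonoid (Fin n)).length = p.length := rfl
      rw [FreeMonoid.length_mul, h, mem_allWords.mp hp]
    rw [h2] at h1
    exact h1

/-- the constructed multiplication as a `RawMul` -/
noncomputable def theRawMul (hσ : IsMatrixMorphism σ) (hδ : IsVectorDerivation σ δ) :
    RawMul 𝔽 n where
  mul := rmul σ δ
  mul_add := rmul_add_right hσ hδ
  add_mul := rmul_add_left
  mul_assoc := rmul_assoc hσ hδ
  one_mul := rmul_one_left
  mul_one := rmul_one_right hσ hδ
  mono_mul_mono := rmul_mono hσ hδ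
  const_mul := rmul_const
  deg_mul := deg_rmul hσ hδ

/-- Uniqueness: any admissible multiplication with the commutation rule agrees
with the constructed one. -/
theorem mul_eq_rmul {S : RawMul 𝔽 n} (hσ : IsMatrixMorphism σ)
    (hδ : IsVectorDerivation σ δ) (hS : HasCommRule S σ δ) : S.mul = rmul σ δ := by
  have hXK : ∀ (i : Fin n) (K : SkewPoly 𝔽 n), S.mul (X 𝔽 i) K = Lmap σ δ i K := by
    intro i K
    induction K using Finsupp.induction with
    | zero => rw [mul_zero' S, Lmap_zero]
    | single_add m c f hmf hc ih =>
      rw [S.mul_add, ih, Lmap_add hσ hδ]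
      congr 1
      rw [mul_X_single hS, Lmap_single hσ hδ]
  have hW : ∀ (m : FreeMonoid (Fin n)) (G : SkewPoly 𝔽 n),
      S.mul (Finsupp.single m (1:𝔽)) G = Wmap σ δ m G := by
    intro m
    induction m using FreeMonoid.inductionOn' with
    | one =>
      intro G
      have : (Finsupp.single (1 : FreeMonoid (Fin n)) (1:𝔽)) = C n 1 := rfl
      rw [this, S.one_mul, Wmap_one]
    | of_mul i m ih =>
      intro G
      rw [← S.mono_mul_mono (FreeMonoid.of i) m, S.mul_assoc, ih, Wmap_cons, ← hXK]
      rfl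
  funext F G
  have h1 : S.mul F G = F.sum fun m a => S.mul (Finsupp.single m a) G := by
    conv_lhs => rw [← Finsupp.sum_single F]
    exact map_finsuppSum (mulRight S G) F _
  rw [h1, rmul]
  refine Finsupp.sum_congr fun m _ => ?_
  rw [single_eq_smul, smul_mul', hW m G]

theorem rawMul_ext {S S' : RawMul 𝔽 n} (h : S.mul = S'.mul) : S = S' := by
  cases S; cases S'
  cases h
  rfl

end Construction

end Stmt0Aux

/-- (i) Any ring multiplication on the free module with the stated
properties determines a unique pair `(σ, δ)` via `xᵢ a = Σⱼ σ_{i,j}(a) xⱼ + δᵢ(a)`, and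
this `σ` is a matrix morphism and `δ` a `σ`-vector derivation. (ii) Conversely, every
matrix morphism `σ` and `σ`-vector derivation `δ` arise from exactly one such
multiplication. -/
theorem stmt0 {𝔽 : Type*} [DivisionRing 𝔽] {n : ℕ} (hn : 0 < n) :
    (∀ S : RawMul 𝔽 n,
      (∃! p : (𝔽 → Matrix (Fin n) (Fin n) 𝔽) × (𝔽 → Fin n → 𝔽), HasCommRule S p.1 p.2) ∧
      (∀ (σ : 𝔽 → Matrix (Fin n) (Fin n) 𝔽) (δ : 𝔽 → Fin n → 𝔽),
        HasCommRule S σ δ → IsMatrixMorphism σ ∧ IsVectorDerivation σ δ)) ∧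
    (∀ (σ : 𝔽 → Matrix (Fin n) (Fin n) 𝔽) (δ : 𝔽 → Fin n → 𝔽),
      IsMatrixMorphism σ → IsVectorDerivation σ δ →
        ∃! S : RawMul 𝔽 n, HasCommRule S σ δ) := by
  constructor
  · intro S
    exact ⟨Stmt0Aux.partA_exists_unique S, fun σ δ h => Stmt0Aux.partA_props h⟩
  · intro σ δ hσ hδ
    refine ⟨Stmt0Aux.theRawMul hσ hδ, fun i a => Stmt0Aux.rmul_comm_rule hσ hδ i a, ?_⟩
    intro S hS
    exact Stmt0Aux.rawMul_ext (Stmt0Aux.mul_eq_rmul hσ hδ hS)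
end

section
/- For every a = (a₁,…,aₙ) ∈ 𝔽ⁿ and every F ∈ R = 𝔽[x₁,…,xₙ; σ, δ], there exist unique G₁, G₂, …, Gₙ ∈ R and a unique b ∈ 𝔽 such that F = Σ_{i=1}^n Gᵢ·(xᵢ − aᵢ) + b. -/
/- Common setup: free multivariate skew polynomial rings over a division ring. -/

open Matrix Finsupp

open SkewPoly

namespace SkewPoly

variable {𝔽 : Type*} [DivisionRing 𝔽] {n : ℕ} (S : RawMul 𝔽 n)

variable (S : RawMul 𝔽 n)

lemma mul_zero' (F : SkewPoly 𝔽 n) : S.mul F 0 = 0 := by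
  have h := S.mul_add F 0 0
  rw [add_zero] at h
  exact left_eq_add.mp h

lemma zero_mul' (F : SkewPoly 𝔽 n) : S.mul 0 F = 0 := by
  have h := S.add_mul 0 0 F
  rw [add_zero] at h
  exact left_eq_add.mp h

lemma mul_sub' (F G H : SkewPoly 𝔽 n) : S.mul F (G - H) = S.mul F G - S.mul F H := by
  have h := S.mul_add F (G - H) H
  rw [sub_add_cancel] at h
  rw [eq_sub_iff_add_eq, ← h]

lemma sub_mul' (F G H : SkewPoly 𝔽 n) : S.mul (F - G) H = S.mul F H - S.mul G H := by
  have h := S.add_mul (F - G) G H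
  rw [sub_add_cancel] at h
  rw [eq_sub_iff_add_eq, ← h]

lemma smul_mul (c : 𝔽) (F G : SkewPoly 𝔽 n) : S.mul (c • F) G = c • S.mul F G := by
  rw [← S.const_mul c F, S.mul_assoc, S.const_mul]

lemma single_eq_smul (m : FreeMonoid (Fin n)) (c : 𝔽) :
    (Finsupp.single m c : SkewPoly 𝔽 n) = c • Finsupp.single m 1 := by
  rw [Finsupp.smul_single', mul_one]

lemma single_mul_single (m m' : FreeMonoid (Fin n)) (c : 𝔽) :
    S.mul (Finsupp.single m c) (Finsupp.single m' 1) = Finsupp.single (m * m') c := by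
  rw [single_eq_smul, smul_mul, S.mono_mul_mono, ← single_eq_smul]

lemma mul_X (G : SkewPoly 𝔽 n) (i : Fin n) :
    S.mul G (X 𝔽 i) = G.mapDomain (· * FreeMonoid.of i) := by
  induction G using Finsupp.induction with
  | zero => rw [zero_mul', Finsupp.mapDomain_zero]
  | single_add m c G _ _ ih =>
    rw [S.add_mul, ih, Finsupp.mapDomain_add, Finsupp.mapDomain_single]
    show S.mul _ (Finsupp.single (FreeMonoid.of i) 1) + _ = _
    rw [single_mul_single]

lemma deg_le_iff {F : SkewPoly 𝔽 n} {d : ℕ} :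
    deg F ≤ (d : WithBot ℕ) ↔ ∀ m ∈ F.support, FreeMonoid.length m ≤ d := by
  simp [deg, Finset.sup_le_iff, Nat.cast_le]

lemma apply_eq_zero_of_deg_le {F : SkewPoly 𝔽 n} {d : ℕ} (h : deg F ≤ (d : WithBot ℕ))
    {w : FreeMonoid (Fin n)} (hw : d < FreeMonoid.length w) : F w = 0 := by
  by_contra hc
  exact absurd (deg_le_iff.mp h w (Finsupp.mem_support_iff.mpr hc)) (not_le.mpr hw)

lemma deg_single_le (m : FreeMonoid (Fin n)) (c : 𝔽) :
    deg (Finsupp.single m c : SkewPoly 𝔽 n) ≤ (FreeMonoid.length m : WithBot ℕ) := by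
  refine deg_le_iff.mpr fun m' hm' => ?_
  have := Finsupp.support_single_subset hm'
  simp only [Finset.mem_singleton] at this
  subst this; exact le_rfl

lemma deg_C_le (c : 𝔽) : deg (C n c) ≤ ((0 : ℕ) : WithBot ℕ) := by
  simpa [C, FreeMonoid.length_one] using deg_single_le (1 : FreeMonoid (Fin n)) c

lemma eq_one_or_concat (m : FreeMonoid (Fin n)) :
    m = 1 ∨ ∃ m' i, m = m' * FreeMonoid.of i := by
  rcases (FreeMonoid.toList m).eq_nil_or_concat with h | ⟨l, x, h⟩
  · left
    exact FreeMonoid.toList.injective (by simp [h])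
  · right
    exact ⟨FreeMonoid.ofList l, x, FreeMonoid.toList.injective
      (by simp [h, List.concat_eq_append])⟩

lemma concat_inj' {m m' : FreeMonoid (Fin n)} {i i' : Fin n}
    (h : m * FreeMonoid.of i = m' * FreeMonoid.of i') : m = m' ∧ i = i' := by
  have h2 := congrArg FreeMonoid.toList h
  simp only [FreeMonoid.toList_mul, FreeMonoid.toList_of, ← List.concat_eq_append] at h2
  obtain ⟨h3, h4⟩ := List.concat_inj.mp h2
  exact ⟨FreeMonoid.toList.injective h3, h4⟩

noncomputable def divSet (S : RawMul 𝔽 n) (a : Fin n → 𝔽) : Submodule 𝔽 (SkewPoly 𝔽 n) where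
  carrier := {F | ∃ G : Fin n → SkewPoly 𝔽 n, ∃ b : 𝔽,
    F = (∑ i : Fin n, S.mul (G i) (X 𝔽 i - C n (a i))) + C n b}
  zero_mem' := ⟨0, 0, by simp [zero_mul' S, C]⟩
  add_mem' := by
    rintro F F' ⟨G, b, rfl⟩ ⟨G', b', rfl⟩
    refine ⟨G + G', b + b', ?_⟩
    simp only [Pi.add_apply, S.add_mul, Finset.sum_add_distrib, C, Finsupp.single_add]
    abel
  smul_mem' := by
    rintro c F ⟨G, b, rfl⟩
    refine ⟨fun i => c • G i, c * b, ?_⟩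
    simp only [smul_mul S, smul_add, Finset.smul_sum, C, Finsupp.smul_single']

lemma C_mem (a : Fin n → 𝔽) (b : 𝔽) : C n b ∈ divSet S a :=
  ⟨0, b, by simp [zero_mul' S]⟩

lemma mul_gen_mem (a : Fin n → 𝔽) (H : SkewPoly 𝔽 n) (i : Fin n) :
    S.mul H (X 𝔽 i - C n (a i)) ∈ divSet S a := by
  refine ⟨Pi.single i H, 0, ?_⟩
  rw [Finset.sum_eq_single i (fun j _ hj => by rw [Pi.single_eq_of_ne hj, zero_mul' S])
    (fun h => absurd (Finset.mem_univ i) h), Pi.single_eq_same]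
  simp [C]

lemma single_mem (a : Fin n → 𝔽) :
    ∀ d (m : FreeMonoid (Fin n)), FreeMonoid.length m < d → ∀ c : 𝔽,
      (Finsupp.single m c : SkewPoly 𝔽 n) ∈ divSet S a := by
  intro d
  induction d using Nat.strong_induction_on with
  | _ d ih =>
    intro m hm c
    rw [single_eq_smul]
    refine Submodule.smul_mem _ _ ?_
    rcases eq_one_or_concat m with rfl | ⟨m', i, rfl⟩
    · exact C_mem S a 1
    · have h1 : (Finsupp.single (m' * FreeMonoid.of i) (1 : 𝔽) : SkewPoly 𝔽 n)
          = S.mul (Finsupp.single m' 1) (X 𝔽 i) := (single_mul_single S m' _ 1).symm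
      have h2 : S.mul (Finsupp.single m' 1) (X 𝔽 i)
          = S.mul (Finsupp.single m' 1) (X 𝔽 i - C n (a i))
            + S.mul (Finsupp.single m' 1) (C n (a i)) := by
        rw [← S.mul_add, sub_add_cancel]
      rw [h1, h2]
      refine Submodule.add_mem _ (mul_gen_mem S a _ i) ?_
      by_cases ha : a i = 0
      · simp [ha, C, mul_zero' S, Submodule.zero_mem]
      · set Q := S.mul (Finsupp.single m' (1 : 𝔽)) (C n (a i)) with hQ
        have hdeg : deg Q ≤ ((FreeMonoid.length m' : ℕ) : WithBot ℕ) := by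
          rw [hQ, S.deg_mul _ _ (by simp [Finsupp.single_eq_zero])
            (by simp [C, Finsupp.single_eq_zero, ha])]
          calc deg (Finsupp.single m' (1:𝔽) : SkewPoly 𝔽 n) + deg (C n (a i))
              ≤ ((FreeMonoid.length m' : ℕ) : WithBot ℕ) + ((0 : ℕ) : WithBot ℕ) :=
                add_le_add (deg_single_le m' 1) (deg_C_le (a i))
            _ = ((FreeMonoid.length m' : ℕ) : WithBot ℕ) := by
                rw [Nat.cast_zero, add_zero]
        have hmlt : FreeMonoid.length m' + 1 < d := by
          simpa [FreeMonoid.length_mul, FreeMonoid.length_of] using hm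
        rw [← Finsupp.sum_single Q]
        refine Submodule.sum_mem _ fun w hw => ?_
        exact ih (FreeMonoid.length m' + 1) hmlt w
          (Nat.lt_succ_of_le (deg_le_iff.mp hdeg w hw)) (Q w)

lemma mem_divSet (a : Fin n → 𝔽) (F : SkewPoly 𝔽 n) : F ∈ divSet S a := by
  rw [← Finsupp.sum_single F]
  exact Submodule.sum_mem _ fun m _ =>
    single_mem S a (FreeMonoid.length m + 1) m (Nat.lt_succ_self _) (F m)

lemma key (a : Fin n → 𝔽) (G : Fin n → SkewPoly 𝔽 n) (b : 𝔽)
    (h : (∑ i : Fin n, S.mul (G i) (X 𝔽 i - C n (a i))) + C n b = 0) :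
    (∀ i, G i = 0) ∧ b = 0 := by
  have hG : ∀ i, G i = 0 := by
    by_contra hc
    push_neg at hc
    obtain ⟨i₁, hi₁⟩ := hc
    classical
    set T := Finset.univ.biUnion (fun i : Fin n => (G i).support) with hT
    have hTne : T.Nonempty := by
      obtain ⟨m, hm⟩ := Finsupp.support_nonempty_iff.mpr hi₁
      exact ⟨m, Finset.mem_biUnion.mpr ⟨i₁, Finset.mem_univ _, hm⟩⟩
    obtain ⟨m₀, hm₀T, hmax⟩ := Finset.exists_max_image T FreeMonoid.length hTne
    obtain ⟨i₀, -, hm₀⟩ := Finset.mem_biUnion.mp hm₀T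
    set d := FreeMonoid.length m₀ with hd
    set w := m₀ * FreeMonoid.of i₀ with hwdef
    have hw : FreeMonoid.length w = d + 1 := by
      simp [hwdef, FreeMonoid.length_mul, FreeMonoid.length_of, hd]
    have hinj : ∀ i : Fin n, Function.Injective (· * FreeMonoid.of i) :=
      fun i => mul_left_injective _
    have hterm : ∀ i : Fin n,
        (S.mul (G i) (X 𝔽 i - C n (a i))) w = if i = i₀ then G i₀ m₀ else 0 := by
      intro i
      have hGle : deg (G i) ≤ (d : WithBot ℕ) := deg_le_iff.mpr fun m hm =>
        hmax m (Finset.mem_biUnion.mpr ⟨i, Finset.mem_univ _, hm⟩)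
      have h2 : (S.mul (G i) (C n (a i))) w = 0 := by
        by_cases ha : a i = 0
        · simp [ha, C, mul_zero' S]
        · by_cases hGz : G i = 0
          · simp [hGz, zero_mul' S]
          · refine apply_eq_zero_of_deg_le ?_ (by rw [hw]; exact Nat.lt_succ_self d)
            rw [S.deg_mul _ _ hGz (by simp [C, Finsupp.single_eq_zero, ha])]
            calc deg (G i) + deg (C n (a i))
                ≤ (d : WithBot ℕ) + ((0:ℕ) : WithBot ℕ) := add_le_add hGle (deg_C_le _)
              _ = (d : WithBot ℕ) := by rw [Nat.cast_zero, add_zero]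
      rw [mul_sub' S, Finsupp.sub_apply, h2, sub_zero, mul_X S]
      by_cases hii : i = i₀
      · subst hii
        rw [if_pos rfl, hwdef]
        exact Finsupp.mapDomain_apply (hinj i) (G i) m₀
      · rw [if_neg hii]
        refine Finsupp.mapDomain_notin_range _ _ fun ⟨m, hm⟩ => ?_
        exact hii (concat_inj' hm).2
    have hcoef := congrArg (fun (F : SkewPoly 𝔽 n) => F w) h
    simp only [Finsupp.add_apply, Finsupp.coe_zero, Pi.zero_apply,
      Finsupp.finset_sum_apply] at hcoef
    rw [Finset.sum_congr rfl (fun i _ => hterm i), Finset.sum_ite_eq' Finset.univ i₀,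
      if_pos (Finset.mem_univ i₀)] at hcoef
    have hCw : (C n b) w = 0 := by
      rw [C, Finsupp.single_apply_eq_zero]
      intro hw1
      exfalso
      rw [hw1, FreeMonoid.length_one] at hw
      omega
    rw [hCw, add_zero] at hcoef
    exact Finsupp.mem_support_iff.mp hm₀ hcoef
  refine ⟨hG, ?_⟩
  have : (∑ i : Fin n, S.mul (G i) (X 𝔽 i - C n (a i))) = 0 := by
    refine Finset.sum_eq_zero fun i _ => ?_
    rw [hG i, zero_mul' S]
  rw [this, zero_add, C] at h
  exact Finsupp.single_eq_zero.mp h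

end SkewPoly

/-- Unique Euclidean division: for every point `a` and every skew
polynomial `F` there are unique `G₁, …, Gₙ` and `b` with `F = Σᵢ Gᵢ(xᵢ - aᵢ) + b`. -/
theorem stmt1 {𝔽 : Type*} [DivisionRing 𝔽] {n : ℕ} (hn : 0 < n)
    (σ : 𝔽 → Matrix (Fin n) (Fin n) 𝔽) (δ : 𝔽 → Fin n → 𝔽)
    (hσ : IsMatrixMorphism σ) (hδ : IsVectorDerivation σ δ)
    (S : RawMul 𝔽 n) (hS : HasCommRule S σ δ)
    (a : Fin n → 𝔽) (F : SkewPoly 𝔽 n) :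
    ∃! p : (Fin n → SkewPoly 𝔽 n) × 𝔽,
      F = (∑ i : Fin n, S.mul (p.1 i) (X 𝔽 i - C n (a i))) + C n p.2 := by
  obtain ⟨G, b, hGb⟩ := mem_divSet S a F
  refine ⟨(G, b), hGb, ?_⟩
  rintro ⟨G', b'⟩ h'
  simp only at h' ⊢
  have hsum : (∑ i : Fin n, S.mul (G' i - G i) (X 𝔽 i - C n (a i))) + C n (b' - b) = 0 := by
    calc (∑ i : Fin n, S.mul (G' i - G i) (X 𝔽 i - C n (a i))) + C n (b' - b)
        = ((∑ i : Fin n, S.mul (G' i) (X 𝔽 i - C n (a i))) + C n b')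
          - ((∑ i : Fin n, S.mul (G i) (X 𝔽 i - C n (a i))) + C n b) := by
          simp only [sub_mul' S, Finset.sum_sub_distrib, C, Finsupp.single_sub]
          abel
      _ = F - F := by rw [← hGb, ← h']
      _ = 0 := sub_self F
  obtain ⟨hGeq, hbeq⟩ := key S a _ _ hsum
  have h1 : G' = G := funext fun i => sub_eq_zero.mp (hGeq i)
  have h2 : b' = b := sub_eq_zero.mp hbeq
  rw [h1, h2]
end

section
/- (Product rule) Let F, G ∈ R = 𝔽[x₁,…,xₙ; σ, δ] and a ∈ 𝔽ⁿ. If G(a) = 0, then (FG)(a) = 0. If c = G(a) ≠ 0, then (FG)(a) = F(a^c)·G(a). -/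
/- Common setup: free multivariate skew polynomial rings over a division ring. -/

open Matrix Finsupp

open SkewPoly


namespace SkewPolyAux

open SkewPoly Matrix Finset

variable {𝔽 : Type*} [DivisionRing 𝔽] {n : ℕ}

/-- The evaluation of the word `m` at the point `a` (the "norm"). -/
noncomputable def Nm (σ : 𝔽 → Matrix (Fin n) (Fin n) 𝔽) (δ : 𝔽 → Fin n → 𝔽)
    (a : Fin n → 𝔽) : List (Fin n) → 𝔽
  | [] => 1
  | i :: m => (σ (Nm σ δ a m) *ᵥ a) i + δ (Nm σ δ a m) i

/-- Explicit evaluation map. -/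
noncomputable def Ev (σ : 𝔽 → Matrix (Fin n) (Fin n) 𝔽) (δ : 𝔽 → Fin n → 𝔽)
    (a : Fin n → 𝔽) : SkewPoly 𝔽 n →ₗ[𝔽] 𝔽 :=
  Finsupp.linearCombination 𝔽 (fun m => Nm σ δ a (FreeMonoid.toList m))

lemma Ev_single (σ : 𝔽 → Matrix (Fin n) (Fin n) 𝔽) (δ : 𝔽 → Fin n → 𝔽)
    (a : Fin n → 𝔽) (m : List (Fin n)) (c : 𝔽) :
    Ev σ δ a (Finsupp.single (FreeMonoid.ofList m) c) = c * Nm σ δ a m := by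
  simp [Ev, Finsupp.linearCombination_single]

variable (σ : 𝔽 → Matrix (Fin n) (Fin n) 𝔽) (δ : 𝔽 → Fin n → 𝔽) (a : Fin n → 𝔽)
  (S : RawMul 𝔽 n)

lemma Ev_C (b : 𝔽) : Ev σ δ a (C n b) = b := by
  have h := Ev_single σ δ a [] b
  simpa [C, Nm] using h

lemma mul_zero' (F : SkewPoly 𝔽 n) : S.mul F 0 = 0 := by
  have h : S.mul F 0 + S.mul F 0 = S.mul F 0 + 0 := by
    rw [← S.mul_add, add_zero, add_zero]
  exact add_left_cancel h

lemma zero_mul' (F : SkewPoly 𝔽 n) : S.mul 0 F = 0 := by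
  have h : S.mul 0 F + S.mul 0 F = S.mul 0 F + 0 := by
    rw [← S.add_mul, add_zero, add_zero]
  exact add_left_cancel h

lemma mul_sub' (F G H : SkewPoly 𝔽 n) : S.mul F (G - H) = S.mul F G - S.mul F H := by
  have h : S.mul F (G - H) + S.mul F H = S.mul F G := by
    rw [← S.mul_add, sub_add_cancel]
  rw [← h]; abel

lemma sum_mul' {ι : Type*} (s : Finset ι) (f : ι → SkewPoly 𝔽 n) (H : SkewPoly 𝔽 n) :
    S.mul (∑ i ∈ s, f i) H = ∑ i ∈ s, S.mul (f i) H := by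
  induction s using Finset.cons_induction with
  | empty => simp [zero_mul']
  | cons i s hi ih => rw [Finset.sum_cons, Finset.sum_cons, S.add_mul, ih]

lemma mul_sum' {ι : Type*} (s : Finset ι) (f : ι → SkewPoly 𝔽 n) (H : SkewPoly 𝔽 n) :
    S.mul H (∑ i ∈ s, f i) = ∑ i ∈ s, S.mul H (f i) := by
  induction s using Finset.cons_induction with
  | empty => simp [mul_zero']
  | cons i s hi ih => rw [Finset.sum_cons, Finset.sum_cons, S.mul_add, ih]

lemma single_eq (m : FreeMonoid (Fin n)) (c : 𝔽) :
    Finsupp.single m c = S.mul (C n c) (Finsupp.single m 1) := by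
  rw [S.const_mul, Finsupp.smul_single, smul_eq_mul, mul_one]

lemma C_mul_C (b c : 𝔽) : S.mul (C n b) (C n c) = C n (b * c) := by
  rw [S.const_mul]; simp [C, Finsupp.smul_single, smul_eq_mul]

lemma X_eq (i : Fin n) : X 𝔽 i = Finsupp.single (FreeMonoid.ofList [i]) 1 := rfl

lemma single_cons (i : Fin n) (m : List (Fin n)) :
    Finsupp.single (FreeMonoid.ofList (i :: m)) (1 : 𝔽) =
      S.mul (X 𝔽 i) (Finsupp.single (FreeMonoid.ofList m) 1) := by
  rw [X, S.mono_mul_mono, ← FreeMonoid.ofList_cons]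

lemma Ev_C_mul (c : 𝔽) (H : SkewPoly 𝔽 n) :
    Ev σ δ a (S.mul (C n c) H) = c * Ev σ δ a H := by
  rw [S.const_mul, (Ev σ δ a).map_smul, smul_eq_mul]

section sd
variable (hσ : IsMatrixMorphism σ) (hδ : IsVectorDerivation σ δ)

lemma sigma_zero (hσ : IsMatrixMorphism σ) : σ 0 = 0 := by
  have h := hσ.2.1 0 0
  rw [add_zero] at h
  exact (left_eq_add.mp h)

lemma delta_zero (hδ : IsVectorDerivation σ δ) : δ 0 = 0 := by
  have h := hδ.1 0 0
  rw [add_zero] at h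
  exact (left_eq_add.mp h)

lemma delta_one (hσ : IsMatrixMorphism σ) (hδ : IsVectorDerivation σ δ) : δ 1 = 0 := by
  have h := hδ.2 1 1
  rw [one_mul, hσ.1, Matrix.one_mulVec] at h
  simp only [mul_one] at h
  exact (left_eq_add.mp h)

lemma Ev_X (hσ : IsMatrixMorphism σ) (hδ : IsVectorDerivation σ δ) (i : Fin n) :
    Ev σ δ a (X 𝔽 i) = a i := by
  rw [X_eq, Ev_single, one_mul]
  simp [Nm, hσ.1, Matrix.one_mulVec, delta_one σ δ hσ hδ]

end sd

section main
variable (hσ : IsMatrixMorphism σ) (hδ : IsVectorDerivation σ δ) (hS : HasCommRule S σ δ)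

lemma Ev_X_mul_single (hσ : IsMatrixMorphism σ) (hδ : IsVectorDerivation σ δ)
    (hS : HasCommRule S σ δ) (i : Fin n) (m : List (Fin n)) (c : 𝔽) :
    Ev σ δ a (S.mul (X 𝔽 i) (Finsupp.single (FreeMonoid.ofList m) c)) =
      (σ (c * Nm σ δ a m) *ᵥ a) i + δ (c * Nm σ δ a m) i := by
  set b := Nm σ δ a m with hb
  rw [single_eq S, ← S.mul_assoc, hS i c, S.add_mul, sum_mul', map_add, map_sum]
  have h1 : ∀ j : Fin n,
      Ev σ δ a (S.mul (Finsupp.single (FreeMonoid.of j) (σ c i j))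
        (Finsupp.single (FreeMonoid.ofList m) 1)) = σ c i j * Nm σ δ a (j :: m) := by
    intro j
    rw [single_eq S (FreeMonoid.of j), S.mul_assoc, ← X, ← single_cons, Ev_C_mul, Ev_single,
      one_mul]
  have h2 : Ev σ δ a (S.mul (C n (δ c i)) (Finsupp.single (FreeMonoid.ofList m) 1))
      = δ c i * b := by
    rw [Ev_C_mul, Ev_single, one_mul]
  rw [Finset.sum_congr rfl fun j _ => h1 j, h2, hσ.2.2, hδ.2, ← Matrix.mulVec_mulVec]
  simp only [Nm, ← hb, Pi.add_apply, mul_add]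
  rw [Finset.sum_add_distrib]
  simp [Matrix.mulVec, dotProduct, add_assoc]

lemma Ev_X_mul (hσ : IsMatrixMorphism σ) (hδ : IsVectorDerivation σ δ)
    (hS : HasCommRule S σ δ) (i : Fin n) (K : SkewPoly 𝔽 n) :
    Ev σ δ a (S.mul (X 𝔽 i) K) = (σ (Ev σ δ a K) *ᵥ a) i + δ (Ev σ δ a K) i := by
  induction K using Finsupp.induction with
  | zero =>
    simp [mul_zero', sigma_zero σ hσ, delta_zero σ δ hδ, Matrix.zero_mulVec]
  | single_add m c K hm hc ih =>
    rw [S.mul_add, map_add, map_add, ih, ← FreeMonoid.ofList_toList m,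
      Ev_X_mul_single σ δ a S hσ hδ hS, Ev_single, hσ.2.1, hδ.1, Matrix.add_mulVec]
    simp only [Pi.add_apply]
    abel

lemma vanish_single (hσ : IsMatrixMorphism σ) (hδ : IsVectorDerivation σ δ)
    (hS : HasCommRule S σ δ) (i : Fin n) (m : List (Fin n)) :
    ∀ c : 𝔽, Ev σ δ a (S.mul (Finsupp.single (FreeMonoid.ofList m) c)
      (X 𝔽 i - C n (a i))) = 0 := by
  induction m with
  | nil =>
    intro c
    have h : (Finsupp.single (FreeMonoid.ofList ([] : List (Fin n))) c : SkewPoly 𝔽 n)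
        = C n c := rfl
    rw [h, S.const_mul, (Ev σ δ a).map_smul, map_sub, Ev_X σ δ a hσ hδ, Ev_C, sub_self,
      smul_zero]
  | cons j m ih =>
    intro c
    rw [single_eq S (FreeMonoid.ofList (j :: m)) c, single_cons S j m, S.mul_assoc,
      S.mul_assoc, Ev_C_mul, Ev_X_mul σ δ a S hσ hδ hS]
    have h0 : Ev σ δ a (S.mul (Finsupp.single (FreeMonoid.ofList m) 1)
        (X 𝔽 i - C n (a i))) = 0 := ih 1
    rw [h0, sigma_zero σ hσ, delta_zero σ δ hδ]
    simp

lemma vanish (hσ : IsMatrixMorphism σ) (hδ : IsVectorDerivation σ δ)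
    (hS : HasCommRule S σ δ) (i : Fin n) (F : SkewPoly 𝔽 n) :
    Ev σ δ a (S.mul F (X 𝔽 i - C n (a i))) = 0 := by
  induction F using Finsupp.induction with
  | zero => rw [zero_mul', map_zero]
  | single_add m c F hm hc ih =>
    rw [S.add_mul, map_add, ih, add_zero, ← FreeMonoid.ofList_toList m,
      vanish_single σ δ a S hσ hδ hS i]

/-- Membership in the left ideal generated by the `xᵢ - aᵢ`. -/
def InIdl (H : SkewPoly 𝔽 n) : Prop :=
  ∃ G : Fin n → SkewPoly 𝔽 n, H = ∑ i : Fin n, S.mul (G i) (X 𝔽 i - C n (a i))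

lemma InIdl_zero : InIdl a S 0 :=
  ⟨0, by simp [zero_mul']⟩

lemma InIdl_add {H H' : SkewPoly 𝔽 n} (h : InIdl a S H) (h' : InIdl a S H') :
    InIdl a S (H + H') := by
  obtain ⟨G, rfl⟩ := h
  obtain ⟨G', rfl⟩ := h'
  exact ⟨G + G', by simp [S.add_mul, Finset.sum_add_distrib]⟩

lemma InIdl_mul_left {H : SkewPoly 𝔽 n} (F : SkewPoly 𝔽 n) (h : InIdl a S H) :
    InIdl a S (S.mul F H) := by
  obtain ⟨G, rfl⟩ := h
  refine ⟨fun i => S.mul F (G i), ?_⟩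
  rw [mul_sum']
  exact Finset.sum_congr rfl fun i _ => (S.mul_assoc F (G i) _).symm

lemma InIdl_gen (F : SkewPoly 𝔽 n) (j : Fin n) :
    InIdl a S (S.mul F (X 𝔽 j - C n (a j))) := by
  refine ⟨fun i => if i = j then F else 0, ?_⟩
  rw [Finset.sum_eq_single j]
  · simp
  · intro b _ hb; simp [hb, zero_mul']
  · simp

lemma InIdl_sum {ι : Type*} (s : Finset ι) (f : ι → SkewPoly 𝔽 n)
    (h : ∀ i ∈ s, InIdl a S (f i)) : InIdl a S (∑ i ∈ s, f i) := by
  induction s using Finset.cons_induction with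
  | empty => simpa using InIdl_zero a S
  | cons i s hi ih =>
    rw [Finset.sum_cons]
    exact InIdl_add a S (h i (Finset.mem_cons_self i s))
      (ih fun j hj => h j (Finset.mem_cons_of_mem hj))

lemma vanish_InIdl (hσ : IsMatrixMorphism σ) (hδ : IsVectorDerivation σ δ)
    (hS : HasCommRule S σ δ) {H : SkewPoly 𝔽 n} (h : InIdl a S H) :
    Ev σ δ a H = 0 := by
  obtain ⟨G, rfl⟩ := h
  rw [map_sum]
  exact Finset.sum_eq_zero fun i _ => vanish σ δ a S hσ hδ hS i (G i)

lemma gen_smul (e : 𝔽) (j : Fin n) :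
    S.mul (C n e) (X 𝔽 j - C n (a j)) =
      Finsupp.single (FreeMonoid.of j) e - C n (e * a j) := by
  rw [mul_sub', C_mul_C, X, ← single_eq]

lemma C_sum {ι : Type*} (s : Finset ι) (f : ι → 𝔽) :
    C n (∑ i ∈ s, f i) = ∑ i ∈ s, C n (f i) :=
  map_sum (Finsupp.singleAddHom (1 : FreeMonoid (Fin n))) f s

lemma decompose_single (hσ : IsMatrixMorphism σ) (hδ : IsVectorDerivation σ δ)
    (hS : HasCommRule S σ δ) (m : List (Fin n)) :
    ∀ c : 𝔽, InIdl a S (Finsupp.single (FreeMonoid.ofList m) c - C n (c * Nm σ δ a m)) := by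
  induction m with
  | nil =>
    intro c
    have h : (Finsupp.single (FreeMonoid.ofList ([] : List (Fin n))) c : SkewPoly 𝔽 n)
        = C n c := rfl
    rw [h, Nm, mul_one, sub_self]
    exact InIdl_zero a S
  | cons i m ih =>
    intro c
    set b := Nm σ δ a m with hb
    have h1 : Finsupp.single (FreeMonoid.ofList (i :: m)) c - C n (c * Nm σ δ a (i :: m))
        = S.mul (C n c) (Finsupp.single (FreeMonoid.ofList (i :: m)) 1
            - C n (Nm σ δ a (i :: m))) := by
      rw [mul_sub', C_mul_C, ← single_eq]
    rw [h1]
    apply InIdl_mul_left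
    have e2 : (∑ j : Fin n, S.mul (C n (σ b i j)) (X 𝔽 j - C n (a j)))
        = S.mul (X 𝔽 i) (C n b) - C n (Nm σ δ a (i :: m)) := by
      rw [hS i b]
      have hNm : C n (Nm σ δ a (i :: m)) =
          (∑ j : Fin n, C n (σ b i j * a j)) + C n (δ b i) := by
        rw [show Nm σ δ a (i :: m) = (σ b *ᵥ a) i + δ b i from rfl]
        rw [show C n ((σ b *ᵥ a) i + δ b i) = C n ((σ b *ᵥ a) i) + C n (δ b i) from
          Finsupp.single_add _ _ _]
        congr 1
        rw [show (σ b *ᵥ a) i = ∑ j : Fin n, σ b i j * a j from rfl, C_sum]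
      rw [hNm]
      rw [Finset.sum_congr rfl fun j _ => gen_smul a S (σ b i j) j,
        Finset.sum_sub_distrib]
      abel
    have e1 : S.mul (X 𝔽 i) (Finsupp.single (FreeMonoid.ofList m) 1 - C n b)
        = Finsupp.single (FreeMonoid.ofList (i :: m)) 1 - S.mul (X 𝔽 i) (C n b) := by
      rw [mul_sub', ← single_cons]
    have key : Finsupp.single (FreeMonoid.ofList (i :: m)) 1 - C n (Nm σ δ a (i :: m))
        = S.mul (X 𝔽 i) (Finsupp.single (FreeMonoid.ofList m) 1 - C n b)
          + ∑ j : Fin n, S.mul (C n (σ b i j)) (X 𝔽 j - C n (a j)) := by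
      rw [e1, e2]; abel
    rw [key]
    refine InIdl_add a S (InIdl_mul_left a S _ ?_) (InIdl_sum a S _ _ fun j _ => InIdl_gen a S _ j)
    have := ih 1
    rwa [one_mul] at this

lemma decompose (hσ : IsMatrixMorphism σ) (hδ : IsVectorDerivation σ δ)
    (hS : HasCommRule S σ δ) (F : SkewPoly 𝔽 n) :
    InIdl a S (F - C n (Ev σ δ a F)) := by
  induction F using Finsupp.induction with
  | zero =>
    rw [map_zero]
    have h : (C n (0 : 𝔽) : SkewPoly 𝔽 n) = 0 := Finsupp.single_zero _
    rw [h, sub_zero]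
    exact InIdl_zero a S
  | single_add m c F hm hc ih =>
    have hd : InIdl a S (Finsupp.single m c - C n (c * Nm σ δ a (FreeMonoid.toList m))) := by
      have h := decompose_single σ δ a S hσ hδ hS (FreeMonoid.toList m) c
      rwa [FreeMonoid.ofList_toList] at h
    have h1 := InIdl_add a S hd ih
    have h2 : Finsupp.single m c - C n (c * Nm σ δ a (FreeMonoid.toList m))
          + (F - C n (Ev σ δ a F))
        = Finsupp.single m c + F - C n (Ev σ δ a (Finsupp.single m c + F)) := by
      rw [map_add, ← FreeMonoid.ofList_toList m, Ev_single,
        show C n (c * Nm σ δ a (FreeMonoid.toList m) + Ev σ δ a F)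
          = C n (c * Nm σ δ a (FreeMonoid.toList m)) + C n (Ev σ δ a F) from
          Finsupp.single_add _ _ _]
      simp only [FreeMonoid.toList_ofList]
      abel
    rw [← h2]
    exact h1

lemma decomposes_ev (hσ : IsMatrixMorphism σ) (hδ : IsVectorDerivation σ δ)
    (hS : HasCommRule S σ δ) (F : SkewPoly 𝔽 n) :
    Decomposes S a F (Ev σ δ a F) := by
  obtain ⟨G, hG⟩ := decompose σ δ a S hσ hδ hS F
  refine ⟨G, ?_⟩
  rw [← hG]; abel

lemma ev_unique (hσ : IsMatrixMorphism σ) (hδ : IsVectorDerivation σ δ)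
    (hS : HasCommRule S σ δ) {F : SkewPoly 𝔽 n} {b : 𝔽} (h : Decomposes S a F b) :
    Ev σ δ a F = b := by
  obtain ⟨G, hG⟩ := h
  rw [hG, map_add, Ev_C, map_sum,
    Finset.sum_eq_zero fun i _ => vanish σ δ a S hσ hδ hS i (G i), zero_add]

lemma eval_eq (hσ : IsMatrixMorphism σ) (hδ : IsVectorDerivation σ δ)
    (hS : HasCommRule S σ δ) (F : SkewPoly 𝔽 n) :
    eval S a F = Ev σ δ a F := by
  have hex : ∃ b : 𝔽, Decomposes S a F b := ⟨_, decomposes_ev σ δ a S hσ hδ hS F⟩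
  rw [eval, dif_pos hex]
  exact (ev_unique σ δ a S hσ hδ hS hex.choose_spec).symm

lemma Ev_mono_mul_C (hσ : IsMatrixMorphism σ) (hδ : IsVectorDerivation σ δ)
    (hS : HasCommRule S σ δ) {c : 𝔽} (hc : c ≠ 0) (m : List (Fin n)) :
    Ev σ δ a (S.mul (Finsupp.single (FreeMonoid.ofList m) 1) (C n c)) =
      Nm σ δ (conj σ δ a c) m * c := by
  induction m with
  | nil =>
    have h : (Finsupp.single (FreeMonoid.ofList ([] : List (Fin n))) (1:𝔽) : SkewPoly 𝔽 n)
        = C n 1 := rfl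
    rw [h, S.one_mul, Ev_C, Nm, one_mul]
  | cons i m ih =>
    rw [single_cons S, S.mul_assoc, Ev_X_mul σ δ a S hσ hδ hS, ih]
    set v := Nm σ δ (conj σ δ a c) m with hv
    have mv : ∀ (M : Matrix (Fin n) (Fin n) 𝔽) (w : Fin n → 𝔽) (k : Fin n),
        (M *ᵥ w) k = ∑ j, M k j * w j := fun _ _ _ => rfl
    have hconj : ∀ j, conj σ δ a c j * c = (σ c *ᵥ a) j + δ c j := by
      intro j
      simp only [conj]
      rw [add_mul, mul_assoc, mul_assoc, inv_mul_cancel₀ hc, mul_one, mul_one]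
    rw [show Nm σ δ (conj σ δ a c) (i :: m) = (σ v *ᵥ conj σ δ a c) i + δ v i from rfl]
    rw [hσ.2.2, hδ.2, ← Matrix.mulVec_mulVec]
    simp only [Pi.add_apply]
    rw [← add_assoc]
    conv_rhs => rw [add_mul]
    congr 1
    rw [mv (σ v) (conj σ δ a c) i, Finset.sum_mul, mv (σ v) ((σ c) *ᵥ a) i,
      mv (σ v) (δ c) i, ← Finset.sum_add_distrib]
    refine Finset.sum_congr rfl fun j _ => ?_
    rw [mul_assoc, hconj j, mul_add]

lemma Ev_mul_C (hσ : IsMatrixMorphism σ) (hδ : IsVectorDerivation σ δ)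
    (hS : HasCommRule S σ δ) {c : 𝔽} (hc : c ≠ 0) (F : SkewPoly 𝔽 n) :
    Ev σ δ a (S.mul F (C n c)) = Ev σ δ (conj σ δ a c) F * c := by
  induction F using Finsupp.induction with
  | zero => rw [zero_mul', map_zero, map_zero, zero_mul]
  | single_add m e F hm he ih =>
    rw [S.add_mul, map_add, map_add, add_mul, ih]
    congr 1
    rw [single_eq S m e, S.mul_assoc, Ev_C_mul]
    rw [show (Finsupp.single m 1 : SkewPoly 𝔽 n) =
      Finsupp.single (FreeMonoid.ofList (FreeMonoid.toList m)) 1 by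
        rw [FreeMonoid.ofList_toList]]
    rw [Ev_mono_mul_C σ δ a S hσ hδ hS hc, Ev_C_mul σ δ (conj σ δ a c) S, Ev_single,
      one_mul, mul_assoc]

end main

end SkewPolyAux
/-- Product rule: if `G(a) = 0` then `(FG)(a) = 0`; if
`c = G(a) ≠ 0` then `(FG)(a) = F(a^c) G(a)`. -/
theorem stmt4 {𝔽 : Type*} [DivisionRing 𝔽] {n : ℕ} (hn : 0 < n)
    (σ : 𝔽 → Matrix (Fin n) (Fin n) 𝔽) (δ : 𝔽 → Fin n → 𝔽)
    (hσ : IsMatrixMorphism σ) (hδ : IsVectorDerivation σ δ)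
    (S : RawMul 𝔽 n) (hS : HasCommRule S σ δ)
    (F G : SkewPoly 𝔽 n) (a : Fin n → 𝔽) :
    (eval S a G = 0 → eval S a (S.mul F G) = 0) ∧
    (eval S a G ≠ 0 →
      eval S a (S.mul F G) = eval S (conj σ δ a (eval S a G)) F * eval S a G) := by
  open SkewPolyAux in
  have heq : ∀ (a : Fin n → 𝔽) (H : SkewPoly 𝔽 n), eval S a H = Ev σ δ a H :=
    fun a H => eval_eq σ δ a S hσ hδ hS H
  constructor
  · intro h0
    rw [heq] at h0 ⊢
    have hG : SkewPolyAux.InIdl a S G := by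
      have h := SkewPolyAux.decompose σ δ a S hσ hδ hS G
      rw [h0] at h
      have hz : (C n (0 : 𝔽) : SkewPoly 𝔽 n) = 0 := Finsupp.single_zero _
      rwa [hz, sub_zero] at h
    exact SkewPolyAux.vanish_InIdl σ δ a S hσ hδ hS
      (SkewPolyAux.InIdl_mul_left a S F hG)
  · intro hc
    rw [heq] at hc
    rw [heq, heq, heq]
    set c := SkewPolyAux.Ev σ δ a G with hcdef
    have hsplit : S.mul F G = S.mul F (G - C n c) + S.mul F (C n c) := by
      rw [SkewPolyAux.mul_sub' S]; abel
    rw [hsplit, map_add,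
      SkewPolyAux.vanish_InIdl σ δ a S hσ hδ hS
        (SkewPolyAux.InIdl_mul_left a S F (SkewPolyAux.decompose σ δ a S hσ hδ hS G)),
      zero_add, SkewPolyAux.Ev_mul_C σ δ a S hσ hδ hS hc]
end

section
/- Let B ⊆ Ω ⊆ 𝔽ⁿ with Ω = B̄. Then: (i) B is a P-basis of Ω if and only if B is a minimal set of P-generators of Ω, i.e., whenever G ⊆ B satisfies Ḡ = Ω, then G = B; (ii) if B is finite, these are further equivalent to: for every ordering b₁, b₂, …, b_M of the elements of B and every i = 0, 1, …, M−1, the point b_{i+1} does not lie in the P-closure of {b₁,…,bᵢ} (where the empty set has P-closure Z(I(∅))). -/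
/- Common setup: free multivariate skew polynomial rings over a division ring. -/

open Matrix Finsupp

open SkewPoly

/-- For `B ⊆ Ω` with `Ω = B̄`: (i) `B` is a P-basis of `Ω` iff it is a
minimal set of P-generators; (ii) if `B` is finite, these are further equivalent to: for
every ordering `b₁, …, b_M` of `B`, each `b_(i+1)` is P-independent from `{b₁, …, bᵢ}`. -/
theorem stmt7 {𝔽 : Type*} [DivisionRing 𝔽] {n : ℕ} (hn : 0 < n)
    (σ : 𝔽 → Matrix (Fin n) (Fin n) 𝔽) (δ : 𝔽 → Fin n → 𝔽)
    (hσ : IsMatrixMorphism σ) (hδ : IsVectorDerivation σ δ)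
    (S : RawMul 𝔽 n) (hS : HasCommRule S σ δ)
    (B Ω : Set (Fin n → 𝔽)) (hBΩ : B ⊆ Ω) (hgen : pClosure S B = Ω) :
    (IsPBasis S B Ω ↔
      ∀ G : Set (Fin n → 𝔽), G ⊆ B → pClosure S G = Ω → G = B) ∧
    (B.Finite →
      (IsPBasis S B Ω ↔
        ∀ l : List (Fin n → 𝔽), l.Nodup → {x | x ∈ l} = B →
          ∀ i : Fin l.length, l.get i ∉ pClosure S {x | x ∈ l.take i.1})) := by
  have hsub : ∀ Ω' : Set (Fin n → 𝔽), Ω' ⊆ pClosure S Ω' := fun Ω' a ha F hF => hF a ha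
  have hmono : ∀ G₁ G₂ : Set (Fin n → 𝔽), G₁ ⊆ G₂ → pClosure S G₁ ⊆ pClosure S G₂ :=
    fun G₁ G₂ h a ha F hF => ha F (fun c hc => hF c (h hc))
  have hidem : ∀ G : Set (Fin n → 𝔽), pClosure S (pClosure S G) ⊆ pClosure S G := by
    intro G a ha F hF
    exact ha F (fun c hc => hc F hF)
  constructor
  · constructor
    · rintro ⟨hB, hind, hcl⟩ G hGB hGΩ
      apply Set.Subset.antisymm hGB
      intro b hb
      by_contra hbG
      have h1 : G ⊆ B \ {b} := fun x hx => ⟨hGB hx, fun h => hbG (h ▸ hx)⟩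
      have hbΩ : b ∈ pClosure S G := hGΩ ▸ hBΩ hb
      exact hind b hb (hmono _ _ h1 hbΩ)
    · intro hmin
      refine ⟨hBΩ, ?_, hgen⟩
      intro a ha hacl
      have h1 : B ⊆ pClosure S (B \ {a}) := by
        intro x hx
        by_cases hxa : x = a
        · exact hxa ▸ hacl
        · exact hsub _ ⟨hx, hxa⟩
      have h2 : pClosure S (B \ {a}) = Ω := by
        apply Set.Subset.antisymm
        · rw [← hgen]; exact hmono _ _ Set.diff_subset
        · rw [← hgen]; exact (hmono _ _ h1).trans (hidem _)
      have h3 := hmin (B \ {a}) Set.diff_subset h2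
      have h4 : a ∈ B \ {a} := by rw [h3]; exact ha
      exact h4.2 rfl
  · intro hfin
    have hbasis_iff : IsPBasis S B Ω ↔ PIndep S B :=
      ⟨fun h => h.2.1, fun h => ⟨hBΩ, h, hgen⟩⟩
    rw [hbasis_iff]
    constructor
    · intro hind l hnd hlB i hcon
      set a := l.get i with ha_def
      have haB : a ∈ B := by rw [← hlB]; exact l.get_mem i
      have hsubset : {x | x ∈ l.take i.1} ⊆ B \ {a} := by
        intro x hx
        refine ⟨hlB ▸ (List.mem_of_mem_take hx), ?_⟩
        intro hxa
        rw [Set.mem_singleton_iff] at hxa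
        subst hxa
        obtain ⟨j, hj, hget⟩ := List.getElem_of_mem hx
        have hjlen : j < l.length := lt_of_lt_of_le hj (by
          simpa using List.length_take_le i.1 l)
        have hji : j < i.1 := lt_of_lt_of_le hj (by
          simp [List.length_take])
        rw [List.getElem_take] at hget
        have heq : l[j]'hjlen = l[i.1]'i.2 := by
          rw [hget, ha_def, List.get_eq_getElem]
        have : j = i.1 := hnd.getElem_inj_iff.mp heq
        omega
      exact hind a haB (hmono _ _ hsubset hcon)
    · intro hlist a ha hacl
      have hfin' : (B \ {a}).Finite := hfin.subset Set.diff_subset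
      set l' := hfin'.toFinset.toList with hl'def
      have hl'set : {x | x ∈ l'} = B \ {a} := by
        ext x; simp [hl'def, Set.Finite.mem_toFinset]
      have hnd' : l'.Nodup := Finset.nodup_toList _
      have hanl' : a ∉ l' := by
        intro h
        have : a ∈ B \ {a} := hl'set ▸ h
        exact this.2 rfl
      set l := l' ++ [a] with hldef
      have hnd : l.Nodup := by
        rw [hldef, List.nodup_append]
        exact ⟨hnd', List.nodup_singleton a, by
          intro x hx y hy hxy
          simp at hy
          rw [hy] at hxy; rw [hxy] at hx; exact hanl' hx⟩
      have hset : {x | x ∈ l} = B := by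
        ext x
        simp only [hldef, List.mem_append, List.mem_singleton, Set.mem_setOf_eq]
        constructor
        · rintro (h | rfl)
          · exact (hl'set ▸ h : x ∈ B \ {a}).1
          · exact ha
        · intro hx
          by_cases hxa : x = a
          · exact Or.inr hxa
          · exact Or.inl (show x ∈ {y | y ∈ l'} from hl'set ▸ ⟨hx, hxa⟩)
      have hi : l'.length < l.length := by simp [hldef]
      have hcontra := hlist l hnd hset ⟨l'.length, hi⟩
      apply hcontra
      have hget : l.get ⟨l'.length, hi⟩ = a := by
        simp [hldef, List.get_eq_getElem]
      have htake : l.take l'.length = l' := by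
        simp [hldef]
      rw [hget, htake, hl'set]
      exact hacl
end

section
/- Every finitely generated P-closed set Ω ⊆ 𝔽ⁿ admits a finite P-basis. -/
/- Common setup: free multivariate skew polynomial rings over a division ring. -/

open Matrix Finsupp

open SkewPoly

lemma subset_pClosure' {𝔽 : Type*} [DivisionRing 𝔽] {n : ℕ} (S : RawMul 𝔽 n)
    (A : Set (Fin n → 𝔽)) : A ⊆ pClosure S A :=
  fun a ha F hF => hF a ha

lemma pClosure_le' {𝔽 : Type*} [DivisionRing 𝔽] {n : ℕ} (S : RawMul 𝔽 n)
    {A B : Set (Fin n → 𝔽)} (h : A ⊆ pClosure S B) : pClosure S A ⊆ pClosure S B := by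
  intro c hc F hF
  exact hc F (fun a ha => h ha F hF)

/-- Every finitely generated P-closed set admits a finite P-basis. -/
theorem stmt8 {𝔽 : Type*} [DivisionRing 𝔽] {n : ℕ} (hn : 0 < n)
    (σ : 𝔽 → Matrix (Fin n) (Fin n) 𝔽) (δ : 𝔽 → Fin n → 𝔽)
    (hσ : IsMatrixMorphism σ) (hδ : IsVectorDerivation σ δ)
    (S : RawMul 𝔽 n) (hS : HasCommRule S σ δ)
    (Ω : Set (Fin n → 𝔽)) (hΩ : IsPClosed S Ω) (hfg : FinGen S Ω) :
    ∃ B : Set (Fin n → 𝔽), B.Finite ∧ IsPBasis S B Ω := by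
  classical
  obtain ⟨G, hGfin, hGΩ, hGcl⟩ := hfg
  set K : Set ℕ := {k | ∃ T : Finset (Fin n → 𝔽), ↑T ⊆ Ω ∧ pClosure S ↑T = Ω ∧ T.card = k}
  have hKne : K.Nonempty := by
    refine ⟨hGfin.toFinset.card, hGfin.toFinset, ?_, ?_, rfl⟩
    · simpa [hGfin.coe_toFinset] using hGΩ
    · simpa [hGfin.coe_toFinset] using hGcl
  obtain ⟨B, hBΩ, hBcl, hBcard⟩ : ∃ T : Finset (Fin n → 𝔽),
      ↑T ⊆ Ω ∧ pClosure S ↑T = Ω ∧ T.card = sInf K := by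
    have := Nat.sInf_mem hKne
    simpa [K] using this
  refine ⟨↑B, B.finite_toSet, hBΩ, ?_, hBcl⟩
  intro a haB hacl
  have haB' : a ∈ B := haB
  -- then the erased set has the same closure, contradicting minimality
  have herase : (↑(B.erase a) : Set (Fin n → 𝔽)) = (↑B : Set (Fin n → 𝔽)) \ {a} := by
    ext x; simp [and_comm]
  have hBsub : (↑B : Set (Fin n → 𝔽)) ⊆ pClosure S ↑(B.erase a) := by
    intro x hx
    by_cases hxa : x = a
    · subst hxa; rw [herase]; exact hacl
    · exact subset_pClosure' S _ (by simpa [Finset.mem_erase, hxa] using hx)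
  have hcl' : pClosure S ↑(B.erase a) = Ω := by
    apply le_antisymm
    · rw [← hBcl]
      exact pClosure_le' S (fun x hx => subset_pClosure' S ↑B
        (by rw [herase] at hx; exact hx.1))
    · rw [← hBcl]; exact pClosure_le' S hBsub
  have hkmem : (B.erase a).card ∈ K :=
    ⟨B.erase a, fun x hx => hBΩ (Finset.erase_subset a B hx), hcl', rfl⟩
  have := Nat.sInf_le hkmem
  rw [Finset.card_erase_of_mem haB'] at this
  have hpos : 0 < B.card := Finset.card_pos.2 ⟨a, haB'⟩
  omega
end
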